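/- arXiv:0711.2195 — 7 statements merged into one kernel-verified Lean document; each statement's English description precedes it below -/
import Mathlib

section
/- Let m be a positive integer, V a finite-dimensional vector space over ℚ, and ψ : V → V a ℚ-linear endomorphism with ψ^m = id. Let K = ℚ(ζ) be the m-th cyclotomic field with ζ a primitive m-th root of unity, let W = K ⊗_ℚ V, let Ψ = id_K ⊗ ψ be the K-linear extension of ψ, and let T : W → V be the ℚ-linear trace map determined by T(c ⊗ v) = Tr_{K/ℚ}(c)·v. For each positive divisor r of m set H_r = {w ∈ W : Ψ(w) = ζ^r·w} ∩ (the image of ℚ(ζ^r) ⊗_ℚ V in W), where ℚ(ζ^r) ⊆ K denotes the subfield generated by ζ^r; each H_r is a ℚ-subspace of W. Then the ℚ-linear map from the external direct sum ⨁_{r ∣ m} H_r to V obtained by applying T on each summand is an isomorphism of ℚ-vector spaces. -/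
open TensorProduct

open TensorProduct Polynomial

set_option linter.unusedSectionVars false

namespace Stmt1Helper

variable {V : Type*} [AddCommGroup V] [Module ℚ V]
variable {K : Type*} [Field K] [Algebra ℚ K]

lemma geom_zero {m : ℕ} {b : K} (hb : b ^ m = 1) (hb1 : b ≠ 1) :
    ∑ k ∈ Finset.range m, b ^ k = 0 := by
  rw [geom_sum_eq hb1, hb, sub_self, zero_div]

noncomputable def Qop (ψ : V →ₗ[ℚ] V) (m : ℕ) (a : K) :
    (K ⊗[ℚ] V) →ₗ[K] (K ⊗[ℚ] V) :=
  ∑ k ∈ Finset.range m, a ^ k • (LinearMap.baseChange K ψ) ^ k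

lemma Qop_apply (ψ : V →ₗ[ℚ] V) (m : ℕ) (a : K) (w : K ⊗[ℚ] V) :
    Qop ψ m a w = ∑ k ∈ Finset.range m, a ^ k • ((LinearMap.baseChange K ψ) ^ k) w := by
  simp [Qop, LinearMap.sum_apply]

lemma baseChange_pow_tmul (ψ : V →ₗ[ℚ] V) (k : ℕ) (c : K) (v : V) :
    ((LinearMap.baseChange K ψ) ^ k) (c ⊗ₜ[ℚ] v) = c ⊗ₜ[ℚ] ((ψ ^ k) v) := by
  induction k with
  | zero => simp
  | succ k ih =>
    rw [pow_succ', Module.End.mul_apply, ih, LinearMap.baseChange_tmul, pow_succ',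
      Module.End.mul_apply]

lemma baseChange_pow_eq_one {m : ℕ} (ψ : V →ₗ[ℚ] V) (hψ : ψ ^ m = 1) :
    (LinearMap.baseChange K ψ) ^ m = 1 := by
  apply LinearMap.ext
  intro w
  induction w using TensorProduct.induction_on with
  | zero => simp
  | tmul c v => rw [baseChange_pow_tmul, hψ]; rfl
  | add x y hx hy => rw [map_add, hx, hy, map_add]

lemma psi_Qop {m : ℕ} (hm : 0 < m) (ψ : V →ₗ[ℚ] V) (hψ : ψ ^ m = 1) {a : K} (ha : a ^ m = 1)
    (w : K ⊗[ℚ] V) :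
    (LinearMap.baseChange K ψ) (Qop ψ m a w) = a⁻¹ • Qop ψ m a w := by
  set Ψ := LinearMap.baseChange K ψ with hΨ
  have hΨm : Ψ ^ m = 1 := baseChange_pow_eq_one ψ hψ
  have ha0 : a ≠ 0 := fun h => by simp [h, zero_pow hm.ne'] at ha
  have key : a • (Ψ * Qop ψ m a) = Qop ψ m a := by
    unfold Qop
    rw [Finset.mul_sum, Finset.smul_sum]
    have hterm : ∀ k ∈ Finset.range m, a • (Ψ * (a ^ k • Ψ ^ k)) = a ^ (k+1) • Ψ ^ (k+1) :=
      fun k _ => by rw [mul_smul_comm, smul_smul, ← pow_succ', ← pow_succ']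
    rw [Finset.sum_congr rfl hterm]
    have h1 : ∑ k ∈ Finset.range (m+1), a ^ k • Ψ ^ k
        = (∑ k ∈ Finset.range m, a ^ (k+1) • Ψ ^ (k+1)) + a ^ 0 • Ψ ^ 0 :=
      Finset.sum_range_succ' _ m
    have h2 : ∑ k ∈ Finset.range (m+1), a ^ k • Ψ ^ k
        = (∑ k ∈ Finset.range m, a ^ k • Ψ ^ k) + a ^ m • Ψ ^ m :=
      Finset.sum_range_succ _ m
    have h3 : a ^ m • Ψ ^ m = a ^ 0 • Ψ ^ 0 := by rw [ha, hΨm, pow_zero, pow_zero]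
    have h12 := h1.symm.trans h2
    rw [h3] at h12
    apply LinearMap.ext
    intro w
    have h' := LinearMap.congr_fun h12 w
    simp only [LinearMap.add_apply] at h'
    exact add_right_cancel h'
  have := congrArg (fun F : (K ⊗[ℚ] V) →ₗ[K] (K ⊗[ℚ] V) => F w) key
  simp only [LinearMap.smul_apply, Module.End.mul_apply] at this
  rw [eq_inv_smul_iff₀ ha0]
  exact this

lemma Qop_of_eigen {m : ℕ} (ψ : V →ₗ[ℚ] V) (a b : K) {w : K ⊗[ℚ] V}
    (hw : (LinearMap.baseChange K ψ) w = b • w) :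
    Qop ψ m a w = (∑ k ∈ Finset.range m, (a * b) ^ k) • w := by
  have hk : ∀ k : ℕ, ((LinearMap.baseChange K ψ) ^ k) w = b ^ k • w := by
    intro k
    induction k with
    | zero => simp
    | succ k ih =>
      rw [pow_succ', Module.End.mul_apply, ih, map_smul, hw, smul_smul, ← pow_succ]
  rw [Qop_apply, Finset.sum_smul]
  exact Finset.sum_congr rfl fun k _ => by rw [hk, smul_smul, mul_pow]

noncomputable def Sop (σ : K ≃ₐ[ℚ] K) : (K ⊗[ℚ] V) →ₗ[ℚ] (K ⊗[ℚ] V) :=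
  LinearMap.rTensor V σ.toLinearMap

lemma Sop_tmul (σ : K ≃ₐ[ℚ] K) (c : K) (v : V) :
    Sop (V := V) σ (c ⊗ₜ[ℚ] v) = (σ c) ⊗ₜ[ℚ] v := rfl

lemma Sop_smul (σ : K ≃ₐ[ℚ] K) (c : K) (w : K ⊗[ℚ] V) :
    Sop σ (c • w) = σ c • Sop σ w := by
  induction w using TensorProduct.induction_on with
  | zero => simp
  | tmul x v =>
    rw [smul_tmul', smul_eq_mul, Sop_tmul, Sop_tmul, smul_tmul', smul_eq_mul, map_mul]
  | add x y hx hy => rw [smul_add, map_add, hx, hy, map_add, smul_add]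

lemma Sop_psi (ψ : V →ₗ[ℚ] V) (σ : K ≃ₐ[ℚ] K) (w : K ⊗[ℚ] V) :
    (LinearMap.baseChange K ψ) (Sop σ w) = Sop σ ((LinearMap.baseChange K ψ) w) := by
  induction w using TensorProduct.induction_on with
  | zero => simp
  | tmul x v => rw [Sop_tmul, LinearMap.baseChange_tmul, LinearMap.baseChange_tmul, Sop_tmul]
  | add x y hx hy => rw [map_add, map_add, hx, hy, map_add, map_add]

lemma Sop_psi_pow (ψ : V →ₗ[ℚ] V) (σ : K ≃ₐ[ℚ] K) (k : ℕ) (w : K ⊗[ℚ] V) :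
    ((LinearMap.baseChange K ψ) ^ k) (Sop σ w) = Sop σ (((LinearMap.baseChange K ψ) ^ k) w) := by
  induction k with
  | zero => simp
  | succ k ih => rw [pow_succ', Module.End.mul_apply, ih, Sop_psi, Module.End.mul_apply]

lemma Sop_Qop (ψ : V →ₗ[ℚ] V) (m : ℕ) (σ : K ≃ₐ[ℚ] K) (a : K) (w : K ⊗[ℚ] V) :
    Sop σ (Qop ψ m a w) = Qop ψ m (σ a) (Sop σ w) := by
  rw [Qop_apply, Qop_apply, map_sum]
  refine Finset.sum_congr rfl fun k _ => ?_
  rw [Sop_smul, map_pow, Sop_psi_pow]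

lemma Sop_one_tmul (σ : K ≃ₐ[ℚ] K) (v : V) :
    Sop σ ((1 : K) ⊗ₜ[ℚ] v) = (1 : K) ⊗ₜ[ℚ] v := by
  rw [Sop_tmul, map_one]

section Trace

variable [FiniteDimensional ℚ K] [IsGalois ℚ K]

lemma trace_conj (σ : K ≃ₐ[ℚ] K) (c : K) :
    Algebra.trace ℚ K (σ c) = Algebra.trace ℚ K c := by
  apply (algebraMap ℚ K).injective
  rw [trace_eq_sum_automorphisms, trace_eq_sum_automorphisms]
  exact Fintype.sum_equiv (Equiv.mulRight σ) _ _ fun τ => rfl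

lemma sum_Sop_eq (T : K ⊗[ℚ] V →ₗ[ℚ] V)
    (hT : ∀ (c : K) (v : V), T (c ⊗ₜ[ℚ] v) = Algebra.trace ℚ K c • v) (w : K ⊗[ℚ] V) :
    ∑ σ : K ≃ₐ[ℚ] K, Sop σ w = (1 : K) ⊗ₜ[ℚ] (T w) := by
  induction w using TensorProduct.induction_on with
  | zero => simp
  | tmul c v =>
    have h1 : ∑ σ : K ≃ₐ[ℚ] K, Sop (V := V) σ (c ⊗ₜ[ℚ] v) = (∑ σ : K ≃ₐ[ℚ] K, σ c) ⊗ₜ[ℚ] v := by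
      rw [sum_tmul]
      rfl
    rw [h1, ← trace_eq_sum_automorphisms, hT, tmul_smul, smul_tmul', Algebra.smul_def, mul_one]
  | add x y hx hy =>
    calc ∑ σ : K ≃ₐ[ℚ] K, Sop σ (x + y) = ∑ σ : K ≃ₐ[ℚ] K, (Sop σ x + Sop σ y) := by
          simp [map_add]
    _ = (1 : K) ⊗ₜ[ℚ] T x + (1 : K) ⊗ₜ[ℚ] T y := by rw [Finset.sum_add_distrib, hx, hy]
    _ = (1 : K) ⊗ₜ[ℚ] T (x + y) := by rw [map_add, tmul_add]

lemma T_Sop (T : K ⊗[ℚ] V →ₗ[ℚ] V)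
    (hT : ∀ (c : K) (v : V), T (c ⊗ₜ[ℚ] v) = Algebra.trace ℚ K c • v) (σ : K ≃ₐ[ℚ] K)
    (w : K ⊗[ℚ] V) : T (Sop σ w) = T w := by
  induction w using TensorProduct.induction_on with
  | zero => simp
  | tmul c v => rw [Sop_tmul, hT, hT, trace_conj]
  | add x y hx hy => rw [map_add, map_add, map_add, hx, hy]

end Trace

lemma fix_adjoin {x : K} (σ : K ≃ₐ[ℚ] K) (hσ : σ x = x) {y : K}
    (hy : y ∈ IntermediateField.adjoin ℚ {x}) : σ y = y := by
  induction hy using IntermediateField.adjoin_induction with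
  | mem z hz => rw [Set.mem_singleton_iff] at hz; rw [hz, hσ]
  | algebraMap z => exact σ.commutes z
  | add z₁ z₂ _ _ h₁ h₂ => rw [map_add, h₁, h₂]
  | inv z _ h => rw [map_inv₀, h]
  | mul z₁ z₂ _ _ h₁ h₂ => rw [map_mul, h₁, h₂]

lemma Sop_fix (σ : K ≃ₐ[ℚ] K) {x : K} (hσ : σ x = x) {w : K ⊗[ℚ] V}
    (hw : w ∈ LinearMap.range
      (LinearMap.rTensor V
        (Subalgebra.toSubmodule (IntermediateField.adjoin ℚ {x}).toSubalgebra).subtype)) :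
    Sop σ w = w := by
  obtain ⟨w₀, rfl⟩ := hw
  rw [Sop, ← LinearMap.comp_apply, ← LinearMap.rTensor_comp]
  have hcomp : σ.toLinearMap ∘ₗ
      (Subalgebra.toSubmodule (IntermediateField.adjoin ℚ {x}).toSubalgebra).subtype
      = (Subalgebra.toSubmodule (IntermediateField.adjoin ℚ {x}).toSubalgebra).subtype := by
    apply LinearMap.ext
    intro y
    have hy : (y : K) ∈ IntermediateField.adjoin ℚ {x} := y.2
    exact fix_adjoin σ hσ hy
  rw [hcomp]

lemma sum_Qop {m : ℕ} (hm : 0 < m) {ζ : K} (hζ : IsPrimitiveRoot ζ m) (ψ : V →ₗ[ℚ] V) :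
    ∑ s ∈ Finset.range m, Qop ψ m (ζ⁻¹ ^ s) = (m : K) • (1 : (K ⊗[ℚ] V) →ₗ[K] (K ⊗[ℚ] V)) := by
  have hζ0 : ζ ≠ 0 := fun h => by
    have := hζ.pow_eq_one
    rw [h, zero_pow hm.ne'] at this
    exact zero_ne_one this
  unfold Qop
  rw [Finset.sum_comm]
  have hterm : ∀ k ∈ Finset.range m,
      ∑ s ∈ Finset.range m, (ζ⁻¹ ^ s) ^ k • (LinearMap.baseChange K ψ) ^ k
        = (if k = 0 then (m : K) else 0) • (LinearMap.baseChange K ψ) ^ k := by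
    intro k hk
    rw [← Finset.sum_smul]
    congr 1
    have hswap : ∀ s, (ζ⁻¹ ^ s) ^ k = (ζ⁻¹ ^ k) ^ s := fun s => by
      rw [← pow_mul, ← pow_mul, mul_comm]
    rw [Finset.sum_congr rfl fun s _ => hswap s]
    by_cases h0 : k = 0
    · subst h0
      simp
    · rw [if_neg h0]
      have hne : ζ⁻¹ ^ k ≠ 1 := by
        rw [inv_pow, ne_eq, inv_eq_one]
        exact hζ.pow_ne_one_of_pos_of_lt h0 (Finset.mem_range.mp hk)
      have hpow : (ζ⁻¹ ^ k) ^ m = 1 := by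
        rw [← pow_mul, mul_comm, pow_mul, inv_pow, hζ.pow_eq_one, inv_one, one_pow]
      exact geom_zero hpow hne
  rw [Finset.sum_congr rfl hterm]
  rw [Finset.sum_eq_single 0]
  · simp
  · intro k _ hk0
    rw [if_neg hk0, zero_smul]
  · intro h
    exact absurd (Finset.mem_range.mpr hm) h

lemma pow_eq_of_modEq {m : ℕ} {x : K} (hx : x ^ m = 1) {i j : ℕ} (h : i ≡ j [MOD m]) :
    x ^ i = x ^ j := by
  have hi : x ^ i = x ^ (i % m) := by
    conv_lhs => rw [← Nat.div_add_mod i m]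
    rw [pow_add, pow_mul, hx, one_pow, one_mul]
  have hj : x ^ j = x ^ (j % m) := by
    conv_lhs => rw [← Nat.div_add_mod j m]
    rw [pow_add, pow_mul, hx, one_pow, one_mul]
  rw [hi, hj, show i % m = j % m from h]

lemma exists_aut {m : ℕ} (hm : 0 < m) [IsCyclotomicExtension {m} ℚ K] {ζ : K}
    (hζ : IsPrimitiveRoot ζ m) (u : (ZMod m)ˣ) :
    ∃ σ : K ≃ₐ[ℚ] K, σ ζ = ζ ^ ((u : ZMod m)).val := by
  haveI : NeZero m := ⟨hm.ne'⟩
  haveI : FiniteDimensional ℚ K := IsCyclotomicExtension.finiteDimensional {m} ℚ K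
  haveI : IsGalois ℚ K := IsCyclotomicExtension.isGalois {m} ℚ K
  have hinj : Function.Injective (hζ.autToPow ℚ) :=
    IsPrimitiveRoot.autToPow_injective ℚ (n := m) hζ
  have hcard : Fintype.card (K ≃ₐ[ℚ] K) = Fintype.card (ZMod m)ˣ := by
    rw [← Nat.card_eq_fintype_card, IsGalois.card_aut_eq_finrank,
      IsCyclotomicExtension.finrank (n := m) K (Polynomial.cyclotomic.irreducible_rat hm),
      ZMod.card_units_eq_totient]
  have hbij : Function.Bijective (hζ.autToPow ℚ) :=
    (Fintype.bijective_iff_injective_and_card _).mpr ⟨hinj, hcard⟩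
  obtain ⟨σ, hσ⟩ := hbij.2 u
  refine ⟨σ, ?_⟩
  have hspec := hζ.autToPow_spec ℚ σ
  rw [hσ] at hspec
  exact hspec.symm

lemma eq_of_conj {m : ℕ} (hm : 0 < m) {ζ : K} (hζ : IsPrimitiveRoot ζ m) {s r : ℕ}
    (hs : s ∣ m) (hr : r ∣ m) (σ : K ≃ₐ[ℚ] K) (h : σ (ζ ^ s) = ζ ^ r) : s = r := by
  have h1 : IsPrimitiveRoot (ζ ^ s) (m / s) := hζ.pow hm (Nat.mul_div_cancel' hs).symm
  have h2 : IsPrimitiveRoot (ζ ^ r) (m / r) := hζ.pow hm (Nat.mul_div_cancel' hr).symm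
  have h3 : IsPrimitiveRoot (σ (ζ ^ s)) (m / s) := h1.map_of_injective σ.injective
  rw [h] at h3
  have h4 : m / s = m / r := h3.unique h2
  calc s = m / (m / s) := (Nat.div_div_self hs hm.ne').symm
  _ = m / (m / r) := by rw [h4]
  _ = r := Nat.div_div_self hr hm.ne'

lemma exists_conj {m : ℕ} (hm : 0 < m) [IsCyclotomicExtension {m} ℚ K] {ζ : K}
    (hζ : IsPrimitiveRoot ζ m) (s : ℕ) :
    ∃ σ : K ≃ₐ[ℚ] K, σ (ζ ^ (if s = 0 then m else Nat.gcd s m)) = ζ ^ s := by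
  by_cases h0 : s = 0
  · subst h0
    refine ⟨1, ?_⟩
    rw [if_pos rfl, AlgEquiv.one_apply, hζ.pow_eq_one, pow_zero]
  · rw [if_neg h0]
    set g := Nat.gcd s m with hg
    have hgpos : 0 < g := Nat.gcd_pos_of_pos_right s hm
    have hgdvd : g ∣ m := Nat.gcd_dvd_right s m
    have hsd : g ∣ s := Nat.gcd_dvd_left s m
    have hcop : Nat.Coprime (s / g) (m / g) := Nat.coprime_div_gcd_div_gcd hgpos
    haveI : NeZero m := ⟨hm.ne'⟩
    haveI : NeZero (m / g) := ⟨(Nat.div_pos (Nat.le_of_dvd hm hgdvd) hgpos).ne'⟩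
    obtain ⟨a, ha⟩ := ZMod.unitsMap_surjective (Nat.div_dvd_of_dvd hgdvd)
      (ZMod.unitOfCoprime (s / g) hcop)
    obtain ⟨σ, hσ⟩ := exists_aut hm hζ a
    refine ⟨σ, ?_⟩
    have hA : (((a : ZMod m).val : ℕ) : ZMod (m / g)) = ((s / g : ℕ) : ZMod (m / g)) := by
      have hc := congrArg (Units.val) ha
      rw [ZMod.unitsMap_def] at hc
      simpa [ZMod.natCast_val, ZMod.coe_unitOfCoprime] using hc
    have hmod : (a : ZMod m).val ≡ s / g [MOD m / g] := (ZMod.natCast_eq_natCast_iff _ _ _).mp hA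
    have hmod2 : g * (a : ZMod m).val ≡ g * (s / g) [MOD g * (m / g)] := hmod.mul_left' g
    rw [Nat.mul_div_cancel' hgdvd, Nat.mul_div_cancel' hsd] at hmod2
    rw [map_pow, hσ, ← pow_mul]
    exact pow_eq_of_modEq hζ.pow_eq_one (by rw [Nat.mul_comm]; exact hmod2)

end Stmt1Helper

open Stmt1Helper in

theorem stmt_1 (m : ℕ) (hm : 0 < m)
    (V : Type*) [AddCommGroup V] [Module ℚ V] [FiniteDimensional ℚ V]
    (ψ : V →ₗ[ℚ] V) (hψ : ψ ^ m = 1)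
    (K : Type*) [Field K] [Algebra ℚ K]
    (hK : IsCyclotomicExtension {m} ℚ K)
    (ζ : K) (hζ : IsPrimitiveRoot ζ m)
    (T : K ⊗[ℚ] V →ₗ[ℚ] V)
    (hT : ∀ (c : K) (v : V), T (c ⊗ₜ[ℚ] v) = Algebra.trace ℚ K c • v)
    (H : {r : ℕ // 0 < r ∧ r ∣ m} → Submodule ℚ (K ⊗[ℚ] V))
    (hH : ∀ r : {r : ℕ // 0 < r ∧ r ∣ m}, H r =
      Submodule.restrictScalars ℚ
        (Module.End.eigenspace (LinearMap.baseChange K ψ) (ζ ^ (r : ℕ))) ⊓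
      LinearMap.range
        (LinearMap.rTensor V
          (Subalgebra.toSubmodule
            (IntermediateField.adjoin ℚ {ζ ^ (r : ℕ)}).toSubalgebra).subtype)) :
    Function.Bijective
      (DirectSum.toModule ℚ {r : ℕ // 0 < r ∧ r ∣ m} V
        (fun r => T ∘ₗ (H r).subtype)) := by
  classical
  haveI : NeZero m := ⟨hm.ne'⟩
  haveI : IsCyclotomicExtension {m} ℚ K := hK
  haveI : FiniteDimensional ℚ K := IsCyclotomicExtension.finiteDimensional {m} ℚ K
  haveI : IsGalois ℚ K := IsCyclotomicExtension.isGalois {m} ℚ K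
  haveI : CharZero K := charZero_of_injective_algebraMap (algebraMap ℚ K).injective
  have hζ0 : ζ ≠ 0 := fun h => by simpa [h, zero_pow hm.ne'] using hζ.pow_eq_one
  set B := DirectSum.toModule ℚ {r : ℕ // 0 < r ∧ r ∣ m} V (fun r => T ∘ₗ (H r).subtype) with hB
  have hHmem : ∀ (s : {r : ℕ // 0 < r ∧ r ∣ m}) (w : K ⊗[ℚ] V), w ∈ H s →
      (LinearMap.baseChange K ψ) w = ζ ^ (s : ℕ) • w ∧
      w ∈ LinearMap.range (LinearMap.rTensor V (Subalgebra.toSubmodule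
        (IntermediateField.adjoin ℚ {ζ ^ (s : ℕ)}).toSubalgebra).subtype) := by
    intro s w hw
    rw [hH s] at hw
    obtain ⟨h1, h2⟩ := Submodule.mem_inf.mp hw
    rw [Submodule.restrictScalars_mem, Module.End.mem_eigenspace_iff] at h1
    exact ⟨h1, h2⟩
  have hmemH : ∀ r : {r : ℕ // 0 < r ∧ r ∣ m}, ∀ v : V,
      Qop ψ m (ζ⁻¹ ^ (r : ℕ)) ((1 : K) ⊗ₜ[ℚ] v) ∈ H r := by
    intro r v
    rw [hH r]
    have ham : (ζ⁻¹ ^ (r : ℕ)) ^ m = 1 := by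
      rw [pow_right_comm, inv_pow, hζ.pow_eq_one, inv_one, one_pow]
    refine Submodule.mem_inf.mpr ⟨?_, ?_⟩
    · rw [Submodule.restrictScalars_mem, Module.End.mem_eigenspace_iff]
      have hpq := psi_Qop hm ψ hψ ham ((1 : K) ⊗ₜ[ℚ] v)
      rw [hpq]
      congr 1
      rw [inv_pow, inv_inv]
    · rw [LinearMap.mem_range]
      have hmemF : ∀ k : ℕ, (ζ⁻¹ ^ (r : ℕ)) ^ k ∈
          Subalgebra.toSubmodule (IntermediateField.adjoin ℚ {ζ ^ (r : ℕ)}).toSubalgebra := by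
        intro k
        rw [Subalgebra.mem_toSubmodule, IntermediateField.mem_toSubalgebra]
        refine pow_mem ?_ k
        rw [inv_pow]
        exact inv_mem (IntermediateField.mem_adjoin_simple_self ℚ (ζ ^ (r : ℕ)))
      refine ⟨∑ k ∈ Finset.range m,
        (⟨(ζ⁻¹ ^ (r : ℕ)) ^ k, hmemF k⟩ :
          (Subalgebra.toSubmodule (IntermediateField.adjoin ℚ {ζ ^ (r : ℕ)}).toSubalgebra))
          ⊗ₜ[ℚ] ((ψ ^ k) v), ?_⟩
      rw [map_sum, Qop_apply]
      refine Finset.sum_congr rfl fun k _ => ?_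
      rw [LinearMap.rTensor_tmul, baseChange_pow_tmul, smul_tmul', smul_eq_mul, mul_one]
      rfl
  letI : AddCommGroup (DirectSum {r : ℕ // 0 < r ∧ r ∣ m} fun i => H i) :=
    @DirectSum.instAddCommGroup _ _ (fun i => (H i).addCommGroup)
  constructor
  · rw [injective_iff_map_eq_zero]
    intro x hx
    have hzero : ∑ s ∈ DFinsupp.support x, T ((x s : K ⊗[ℚ] V)) = 0 := by
      calc ∑ s ∈ DFinsupp.support x, T ((x s : K ⊗[ℚ] V))
          = ∑ s ∈ DFinsupp.support x, B (DirectSum.of (fun r => ↥(H r)) s (x s)) := by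
            refine Finset.sum_congr rfl fun s _ => ?_
            rw [hB, ← DirectSum.lof_eq_of ℚ, DirectSum.toModule_lof]
            rfl
        _ = B (∑ s ∈ DFinsupp.support x, DirectSum.of (fun r => ↥(H r)) s (x s)) :=
            (map_sum B _ _).symm
        _ = B x := by rw [DirectSum.sum_support_of]
        _ = 0 := hx
    refine DFinsupp.ext fun r₀ => ?_
    rw [DirectSum.zero_apply]
    by_cases hsupp : r₀ ∈ DFinsupp.support x
    swap
    · exact DFinsupp.notMem_support_iff.mp hsupp
    set a := ζ⁻¹ ^ (r₀ : ℕ) with ha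
    have ham : a ^ m = 1 := by
      rw [ha, pow_right_comm, inv_pow, hζ.pow_eq_one, inv_one, one_pow]
    have hterm : ∀ s : {r : ℕ // 0 < r ∧ r ∣ m}, ∀ σ : K ≃ₐ[ℚ] K,
        Qop ψ m a (Sop σ ((x s : K ⊗[ℚ] V)))
          = if σ (ζ ^ (s : ℕ)) = ζ ^ ((r₀ : ℕ))
            then (m : K) • Sop σ ((x s : K ⊗[ℚ] V)) else 0 := by
      intro s σ
      obtain ⟨hxe, hxr⟩ := hHmem s _ (x s).2
      have heig : (LinearMap.baseChange K ψ) (Sop σ ((x s : K ⊗[ℚ] V)))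
          = σ (ζ ^ (s : ℕ)) • Sop σ ((x s : K ⊗[ℚ] V)) := by
        rw [Sop_psi, hxe, Sop_smul]
      rw [Qop_of_eigen ψ a _ heig]
      by_cases hcase : σ (ζ ^ (s : ℕ)) = ζ ^ ((r₀ : ℕ))
      · rw [if_pos hcase, hcase]
        have hab : a * ζ ^ ((r₀ : ℕ)) = 1 := by
          rw [ha, inv_pow]
          exact inv_mul_cancel₀ (pow_ne_zero _ hζ0)
        rw [hab]
        simp
      · rw [if_neg hcase]
        have hb1 : a * σ (ζ ^ (s : ℕ)) ≠ 1 := by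
          intro hcontra
          apply hcase
          have hinv : σ (ζ ^ (s : ℕ)) = a⁻¹ := eq_inv_of_mul_eq_one_left
            (by rw [mul_comm]; exact hcontra)
          rw [hinv, ha, inv_pow, inv_inv]
        have hbm : (a * σ (ζ ^ (s : ℕ))) ^ m = 1 := by
          rw [mul_pow, ham, one_mul, ← map_pow, pow_right_comm, hζ.pow_eq_one, one_pow, map_one]
        rw [geom_zero hbm hb1, zero_smul]
    set N := (Finset.univ.filter fun σ : K ≃ₐ[ℚ] K =>
        σ (ζ ^ ((r₀ : ℕ))) = ζ ^ ((r₀ : ℕ))).card with hN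
    have hinner : ∀ s ∈ DFinsupp.support x,
        (∑ σ : K ≃ₐ[ℚ] K, Qop ψ m a (Sop σ ((x s : K ⊗[ℚ] V))))
          = if s = r₀ then N • ((m : K) • ((x r₀ : K ⊗[ℚ] V))) else 0 := by
      intro s _
      rw [Finset.sum_congr rfl fun σ _ => hterm s σ]
      by_cases hs : s = r₀
      · subst hs
        rw [if_pos rfl]
        obtain ⟨_, hxr⟩ := hHmem s _ (x s).2
        rw [← Finset.sum_filter]
        have hfix : ∀ σ ∈ Finset.univ.filter (fun σ : K ≃ₐ[ℚ] K =>
            σ (ζ ^ ((s : ℕ))) = ζ ^ ((s : ℕ))),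
            (m : K) • Sop σ ((x s : K ⊗[ℚ] V)) = (m : K) • ((x s : K ⊗[ℚ] V)) := by
          intro σ hσ
          rw [Sop_fix σ (Finset.mem_filter.mp hσ).2 hxr]
        rw [Finset.sum_congr rfl hfix, Finset.sum_const]
      · rw [if_neg hs]
        refine Finset.sum_eq_zero fun σ _ => ?_
        exact if_neg fun hcontra =>
          hs (Subtype.ext (eq_of_conj hm hζ s.2.2 r₀.2.2 σ hcontra))
    have htotal : (∑ s ∈ DFinsupp.support x,
        ∑ σ : K ≃ₐ[ℚ] K, Qop ψ m a (Sop σ ((x s : K ⊗[ℚ] V)))) = 0 := by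
      have h2 : ∑ s ∈ DFinsupp.support x, ∑ σ : K ≃ₐ[ℚ] K, Sop σ ((x s : K ⊗[ℚ] V))
          = (1 : K) ⊗ₜ[ℚ] (0 : V) := by
        rw [Finset.sum_congr rfl fun s _ => sum_Sop_eq T hT ((x s : K ⊗[ℚ] V)),
          ← tmul_sum, hzero]
      have h3 := congrArg (Qop ψ m a) h2
      rw [map_sum] at h3
      calc (∑ s ∈ DFinsupp.support x,
          ∑ σ : K ≃ₐ[ℚ] K, Qop ψ m a (Sop σ ((x s : K ⊗[ℚ] V))))
          = ∑ s ∈ DFinsupp.support x,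
            Qop ψ m a (∑ σ : K ≃ₐ[ℚ] K, Sop σ ((x s : K ⊗[ℚ] V))) := by
            exact Finset.sum_congr rfl fun s _ => (map_sum (Qop ψ m a) _ _).symm
        _ = 0 := by rw [← map_sum, h2, tmul_zero, map_zero]
    rw [Finset.sum_congr rfl hinner,
      Finset.sum_eq_single_of_mem r₀ hsupp (fun b _ hb => if_neg hb), if_pos rfl] at htotal
    have hNne : N ≠ 0 :=
      Finset.card_ne_zero_of_mem (Finset.mem_filter.mpr ⟨Finset.mem_univ 1, AlgEquiv.one_apply _⟩)
    rw [← Nat.cast_smul_eq_nsmul ℚ] at htotal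
    have h5 := (smul_eq_zero.mp htotal).resolve_left
      (by exact_mod_cast hNne : ((N : ℚ)) ≠ 0)
    have h6 := (smul_eq_zero.mp h5).resolve_left
      (Nat.cast_ne_zero.mpr hm.ne' : ((m : K)) ≠ 0)
    exact Subtype.ext h6
  · intro v
    set nK := Module.finrank ℚ K with hnK
    have hnKpos : 0 < nK := Module.finrank_pos
    have hc : ((m : ℚ) * (nK : ℚ)) ≠ 0 :=
      mul_ne_zero (Nat.cast_ne_zero.mpr hm.ne') (Nat.cast_ne_zero.mpr hnKpos.ne')
    have hD : ∀ s : ℕ, 0 < (if s = 0 then m else Nat.gcd s m) ∧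
        (if s = 0 then m else Nat.gcd s m) ∣ m := by
      intro s
      by_cases h0 : s = 0
      · rw [if_pos h0]; exact ⟨hm, dvd_rfl⟩
      · rw [if_neg h0]; exact ⟨Nat.gcd_pos_of_pos_right s hm, Nat.gcd_dvd_right s m⟩
    refine ⟨∑ s ∈ Finset.range m, DirectSum.lof ℚ {r : ℕ // 0 < r ∧ r ∣ m} (fun r => ↥(H r))
      (⟨if s = 0 then m else Nat.gcd s m, hD s⟩)
      ⟨((m : ℚ) * (nK : ℚ))⁻¹ • Qop ψ m (ζ⁻¹ ^ (if s = 0 then m else Nat.gcd s m))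
        ((1 : K) ⊗ₜ[ℚ] v),
        Submodule.smul_mem _ _ (hmemH ⟨if s = 0 then m else Nat.gcd s m, hD s⟩ v)⟩, ?_⟩
    rw [map_sum]
    have hstep : ∀ s ∈ Finset.range m,
        B (DirectSum.lof ℚ {r : ℕ // 0 < r ∧ r ∣ m} (fun r => ↥(H r))
          (⟨if s = 0 then m else Nat.gcd s m, hD s⟩)
          ⟨((m : ℚ) * (nK : ℚ))⁻¹ • Qop ψ m (ζ⁻¹ ^ (if s = 0 then m else Nat.gcd s m))
            ((1 : K) ⊗ₜ[ℚ] v),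
            Submodule.smul_mem _ _ (hmemH ⟨if s = 0 then m else Nat.gcd s m, hD s⟩ v)⟩)
          = ((m : ℚ) * (nK : ℚ))⁻¹ • T (Qop ψ m (ζ⁻¹ ^ s) ((1 : K) ⊗ₜ[ℚ] v)) := by
      intro s hs
      rw [hB, DirectSum.toModule_lof]
      have hcoe : (T ∘ₗ (H ⟨if s = 0 then m else Nat.gcd s m, hD s⟩).subtype)
          (⟨((m : ℚ) * (nK : ℚ))⁻¹ • Qop ψ m (ζ⁻¹ ^ (if s = 0 then m else Nat.gcd s m))
            ((1 : K) ⊗ₜ[ℚ] v), Submodule.smul_mem _ _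
              (hmemH ⟨if s = 0 then m else Nat.gcd s m, hD s⟩ v)⟩)
          = T (((m : ℚ) * (nK : ℚ))⁻¹ • Qop ψ m (ζ⁻¹ ^ (if s = 0 then m else Nat.gcd s m))
            ((1 : K) ⊗ₜ[ℚ] v)) := rfl
      rw [hcoe, map_smul]
      congr 1
      obtain ⟨σ, hσ⟩ := exists_conj (K := K) hm hζ s
      have hSQ : Sop σ (Qop ψ m (ζ⁻¹ ^ (if s = 0 then m else Nat.gcd s m)) ((1 : K) ⊗ₜ[ℚ] v))
          = Qop ψ m (ζ⁻¹ ^ s) ((1 : K) ⊗ₜ[ℚ] v) := by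
        rw [Sop_Qop, Sop_one_tmul]
        congr 1
        rw [inv_pow, map_inv₀, hσ, ← inv_pow]
      rw [← hSQ, T_Sop T hT]
    rw [Finset.sum_congr rfl hstep, ← Finset.smul_sum]
    have hsum : ∑ s ∈ Finset.range m, T (Qop ψ m (ζ⁻¹ ^ s) ((1 : K) ⊗ₜ[ℚ] v))
        = T (((m : K)) • ((1 : K) ⊗ₜ[ℚ] v)) := by
      rw [← map_sum]
      congr 1
      have hop := sum_Qop (V := V) hm hζ ψ
      have happ := congrArg
        (fun F : (K ⊗[ℚ] V) →ₗ[K] (K ⊗[ℚ] V) => F ((1 : K) ⊗ₜ[ℚ] v)) hop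
      simpa [LinearMap.sum_apply] using happ
    rw [hsum]
    have hms : ((m : K)) • ((1 : K) ⊗ₜ[ℚ] v) = (m : K) ⊗ₜ[ℚ] v := by
      rw [smul_tmul', smul_eq_mul, mul_one]
    rw [hms, hT]
    have htr : Algebra.trace ℚ K ((m : K)) = (nK : ℚ) * (m : ℚ) := by
      rw [show ((m : K)) = algebraMap ℚ K ((m : ℚ)) by rw [map_natCast],
        Algebra.trace_algebraMap, nsmul_eq_mul]
    rw [htr, smul_smul, mul_comm ((nK : ℚ)) ((m : ℚ)), inv_mul_cancel₀ hc, one_smul]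
end

section
/- Let m be a positive integer, V a finite-dimensional vector space over ℚ, and ψ : V → V a ℚ-linear endomorphism with ψ^m = id. Let K = ℚ(ζ) be the m-th cyclotomic field with ζ a primitive m-th root of unity, W = K ⊗_ℚ V, Ψ = id_K ⊗ ψ, and T : W → V the ℚ-linear trace map determined by T(c ⊗ v) = Tr_{K/ℚ}(c)·v. Let j be a positive integer and r = gcd(j, m). Then T restricted to the ℚ-subspace {w ∈ W : Ψ(w) = ζ^j·w} ∩ (the image of ℚ(ζ^r) ⊗_ℚ V in W) is injective. -/
open TensorProduct

set_option synthInstance.maxHeartbeats 1000000 in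
set_option maxHeartbeats 2000000 in
theorem stmt_2 (m : ℕ) (hm : 0 < m)
    (V : Type*) [AddCommGroup V] [Module ℚ V] [FiniteDimensional ℚ V]
    (ψ : V →ₗ[ℚ] V) (hψ : ψ ^ m = 1)
    (K : Type*) [Field K] [Algebra ℚ K]
    (hK : IsCyclotomicExtension {m} ℚ K)
    (ζ : K) (hζ : IsPrimitiveRoot ζ m)
    (T : K ⊗[ℚ] V →ₗ[ℚ] V)
    (hT : ∀ (c : K) (v : V), T (c ⊗ₜ[ℚ] v) = Algebra.trace ℚ K c • v)
    (j : ℕ) (hj : 0 < j) :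
    Function.Injective
      (T ∘ₗ (Submodule.restrictScalars ℚ
          (Module.End.eigenspace (LinearMap.baseChange K ψ) (ζ ^ j)) ⊓
        LinearMap.range
          (LinearMap.rTensor V
            (Subalgebra.toSubmodule
              (IntermediateField.adjoin ℚ {ζ ^ Nat.gcd j m}).toSubalgebra).subtype)).subtype) := by
  classical
  haveI : FiniteDimensional ℚ K := IsCyclotomicExtension.finiteDimensional {m} ℚ K
  haveI : IsGalois ℚ K := IsCyclotomicExtension.isGalois {m} ℚ K
  haveI : CharZero K := charZero_of_injective_algebraMap (algebraMap ℚ K).injective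
  set Ψ := LinearMap.baseChange K ψ with hΨdef
  set b : K := ζ ^ j with hbdef
  have hζ0 : ζ ≠ 0 := by
    intro h
    have := hζ.pow_eq_one
    rw [h, zero_pow hm.ne'] at this
    exact zero_ne_one this
  have hb0 : b ≠ 0 := pow_ne_zero _ hζ0
  have hbm : b ^ m = 1 := by
    rw [hbdef, ← pow_mul, mul_comm, pow_mul, hζ.pow_eq_one, one_pow]
  suffices H : ∀ z : ↥(Submodule.restrictScalars ℚ (Module.End.eigenspace Ψ b) ⊓
      LinearMap.range (LinearMap.rTensor V
        (Subalgebra.toSubmodule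
          (IntermediateField.adjoin ℚ {ζ ^ Nat.gcd j m}).toSubalgebra).subtype)),
      T (z : K ⊗[ℚ] V) = 0 → (z : K ⊗[ℚ] V) = 0 by
    intro x y h
    simp only [LinearMap.comp_apply, Submodule.subtype_apply] at h
    have hd := H (x - y) (by rw [Submodule.coe_sub, map_sub, h, sub_self])
    rw [Submodule.coe_sub, sub_eq_zero] at hd
    exact Subtype.ext hd
  intro z hz
  obtain ⟨hw1, hw2⟩ := z.2
  set w : K ⊗[ℚ] V := (z : K ⊗[ℚ] V) with hwdef
  have hweig : Ψ w = b • w := by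
    exact Module.End.mem_eigenspace_iff.mp hw1
  have hTw : T w = 0 := hz
  show w = 0
  -- semilinearity of rTensor of an algebra equiv
  have smul_lem : ∀ (γ : K ≃ₐ[ℚ] K) (c : K) (x : K ⊗[ℚ] V),
      LinearMap.rTensor V γ.toLinearMap (c • x)
        = γ c • LinearMap.rTensor V γ.toLinearMap x := by
    intro γ c x
    induction x using TensorProduct.induction_on with
    | zero => simp
    | tmul a v =>
        rw [smul_tmul', LinearMap.rTensor_tmul, LinearMap.rTensor_tmul, smul_tmul']
        simp [smul_eq_mul, map_mul]
    | add x y hx hy => rw [smul_add, map_add, map_add, hx, hy, smul_add]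
  -- commuting Ψ with rTensor
  have comm_lem : ∀ (γ : K ≃ₐ[ℚ] K) (x : K ⊗[ℚ] V),
      Ψ (LinearMap.rTensor V γ.toLinearMap x)
        = LinearMap.rTensor V γ.toLinearMap (Ψ x) := by
    intro γ x
    induction x using TensorProduct.induction_on with
    | zero => simp
    | tmul a v => simp [hΨdef]
    | add x y hx hy => rw [map_add, map_add, map_add, map_add, hx, hy]
  -- each transform is an eigenvector
  have eig_lem : ∀ (γ : K ≃ₐ[ℚ] K),
      Ψ (LinearMap.rTensor V γ.toLinearMap w)
        = γ b • LinearMap.rTensor V γ.toLinearMap w := by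
    intro γ
    rw [comm_lem, hweig, smul_lem]
  have pow_eig : ∀ (γ : K ≃ₐ[ℚ] K) (i : ℕ),
      (Ψ ^ i) (LinearMap.rTensor V γ.toLinearMap w)
        = (γ b) ^ i • LinearMap.rTensor V γ.toLinearMap w := by
    intro γ i
    induction i with
    | zero => simp
    | succ n ih =>
        rw [pow_succ', Module.End.mul_apply, ih, map_smul, eig_lem, smul_smul, ← pow_succ]
  -- trace sum identity
  have sum_id : ∀ x : K ⊗[ℚ] V,
      (1 : K) ⊗ₜ[ℚ] (T x) = ∑ γ : K ≃ₐ[ℚ] K, LinearMap.rTensor V γ.toLinearMap x := by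
    intro x
    induction x using TensorProduct.induction_on with
    | zero => simp
    | tmul c v =>
        rw [hT, tmul_smul, smul_tmul']
        have h1 : (Algebra.trace ℚ K c) • (1 : K) = algebraMap ℚ K (Algebra.trace ℚ K c) := by
          rw [Algebra.smul_def, mul_one]
        rw [h1, trace_eq_sum_automorphisms, sum_tmul]
        simp
    | add x y hx hy =>
        rw [map_add, tmul_add, hx, hy, ← Finset.sum_add_distrib]
        simp [map_add]
  have sum_zero : ∑ γ : K ≃ₐ[ℚ] K, LinearMap.rTensor V γ.toLinearMap w = 0 := by
    rw [← sum_id, hTw, tmul_zero]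
  -- apply the projector F = ∑ b^(m-1-i) • Ψ^i
  set F : Module.End K (K ⊗[ℚ] V) := ∑ i ∈ Finset.range m, b ^ (m - 1 - i) • Ψ ^ i with hFdef
  have hF_eig : ∀ (γ : K ≃ₐ[ℚ] K),
      F (LinearMap.rTensor V γ.toLinearMap w)
        = (∑ i ∈ Finset.range m, (γ b) ^ i * b ^ (m - 1 - i)) •
            LinearMap.rTensor V γ.toLinearMap w := by
    intro γ
    rw [hFdef, LinearMap.sum_apply, Finset.sum_smul]
    refine Finset.sum_congr rfl fun i _ => ?_
    rw [LinearMap.smul_apply, pow_eig, smul_smul, mul_comm]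
  have hgbm : ∀ γ : K ≃ₐ[ℚ] K, (γ b) ^ m = 1 := by
    intro γ; rw [← map_pow, hbm, map_one]
  have hS_ne : ∀ γ : K ≃ₐ[ℚ] K, γ b ≠ b →
      (∑ i ∈ Finset.range m, (γ b) ^ i * b ^ (m - 1 - i)) = 0 := by
    intro γ hne
    have h := geom_sum₂_mul (γ b) b m
    rw [hgbm, hbm, sub_self] at h
    exact (mul_eq_zero.mp h).resolve_right (sub_ne_zero.mpr hne)
  have hS_eq : ∀ γ : K ≃ₐ[ℚ] K, γ b = b →
      (∑ i ∈ Finset.range m, (γ b) ^ i * b ^ (m - 1 - i)) = (m : K) * b ^ (m - 1) := by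
    intro γ he
    rw [he]
    have : ∀ i ∈ Finset.range m, b ^ i * b ^ (m - 1 - i) = b ^ (m - 1) := by
      intro i hi
      rw [Finset.mem_range] at hi
      rw [← pow_add]
      congr 1
      omega
    rw [Finset.sum_congr rfl this, Finset.sum_const, Finset.card_range, nsmul_eq_mul]
  -- γ fixing b fixes w
  have fix_lem : ∀ γ : K ≃ₐ[ℚ] K, γ b = b → LinearMap.rTensor V γ.toLinearMap w = w := by
    intro γ he
    obtain ⟨u, hu⟩ := hw2
    set S := (Subalgebra.toSubmodule
        (IntermediateField.adjoin ℚ {ζ ^ Nat.gcd j m}).toSubalgebra) with hSdef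
    have hγζr : γ (ζ ^ Nat.gcd j m) = ζ ^ Nat.gcd j m := by
      have hbez : ((Nat.gcd j m : ℕ) : ℤ) = j * Nat.gcdA j m + m * Nat.gcdB j m :=
        Nat.gcd_eq_gcd_ab j m
      have hrep : ζ ^ Nat.gcd j m = b ^ (Nat.gcdA j m) := by
        have : ζ ^ Nat.gcd j m = ζ ^ ((Nat.gcd j m : ℕ) : ℤ) := by
          rw [zpow_natCast]
        rw [this, hbez, zpow_add₀ hζ0, zpow_mul, zpow_mul, zpow_natCast, zpow_natCast,
          hζ.pow_eq_one, one_zpow, mul_one, hbdef]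
      rw [hrep, map_zpow₀, he]
    have hfix : ∀ x : K, x ∈ (IntermediateField.adjoin ℚ {ζ ^ Nat.gcd j m}).toSubalgebra →
        γ x = x := by
      intro x hx
      have hint : IsIntegral ℚ (ζ ^ Nat.gcd j m) := IsIntegral.of_finite ℚ _
      rw [IntermediateField.adjoin_simple_toSubalgebra_of_isAlgebraic hint.isAlgebraic] at hx
      have hle : Algebra.adjoin ℚ {ζ ^ Nat.gcd j m} ≤
          AlgHom.equalizer (γ : K →ₐ[ℚ] K) (AlgHom.id ℚ K) := by
        apply Algebra.adjoin_le
        intro y hy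
        rw [Set.mem_singleton_iff] at hy
        subst hy
        show γ _ = _
        simpa using hγζr
      exact hle hx
    have hcomp : γ.toLinearMap ∘ₗ S.subtype = S.subtype := by
      ext x
      exact hfix x.1 x.2
    rw [← hu, ← LinearMap.comp_apply, ← LinearMap.rTensor_comp, hcomp]
  -- put it all together
  have hzero : F (∑ γ : K ≃ₐ[ℚ] K, LinearMap.rTensor V γ.toLinearMap w) = 0 := by
    rw [sum_zero, map_zero]
  rw [map_sum] at hzero
  have hsplit := Finset.sum_filter_add_sum_filter_not Finset.univ
    (fun γ : K ≃ₐ[ℚ] K => γ b = b)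
    (fun γ : K ≃ₐ[ℚ] K => F (LinearMap.rTensor V γ.toLinearMap w))
  rw [← hsplit] at hzero
  have h2 : ∑ γ ∈ Finset.univ.filter (fun γ : K ≃ₐ[ℚ] K => ¬ γ b = b),
      F (LinearMap.rTensor V γ.toLinearMap w) = 0 := by
    apply Finset.sum_eq_zero
    intro γ hγ
    rw [Finset.mem_filter] at hγ
    rw [hF_eig, hS_ne γ hγ.2, zero_smul]
  have h1 : ∑ γ ∈ Finset.univ.filter (fun γ : K ≃ₐ[ℚ] K => γ b = b),
      F (LinearMap.rTensor V γ.toLinearMap w)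
      = (Finset.univ.filter (fun γ : K ≃ₐ[ℚ] K => γ b = b)).card •
          (((m : K) * b ^ (m - 1)) • w) := by
    rw [Finset.sum_congr rfl (fun γ hγ => ?_), Finset.sum_const]
    rw [Finset.mem_filter] at hγ
    rw [hF_eig, hS_eq γ hγ.2, fix_lem γ hγ.2]
  rw [h1, h2, add_zero] at hzero
  set c : ℕ := (Finset.univ.filter (fun γ : K ≃ₐ[ℚ] K => γ b = b)).card with hcdef
  have hcpos : 0 < c := by
    rw [hcdef, Finset.card_pos]
    exact ⟨AlgEquiv.refl, by simp⟩
  have hzero2 : ((c : K) * ((m : K) * b ^ (m - 1))) • w = 0 := by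
    rw [mul_smul, Nat.cast_smul_eq_nsmul]
    exact hzero
  have hcK : ((c : K) * ((m : K) * b ^ (m - 1))) ≠ 0 := by
    apply mul_ne_zero
    · exact_mod_cast Nat.cast_ne_zero.mpr hcpos.ne'
    · exact mul_ne_zero (Nat.cast_ne_zero.mpr hm.ne') (pow_ne_zero _ hb0)
  calc w = ((c : K) * ((m : K) * b ^ (m - 1)))⁻¹ •
        (((c : K) * ((m : K) * b ^ (m - 1))) • w) := (inv_smul_smul₀ hcK w).symm
    _ = 0 := by rw [hzero2, smul_zero]
end

section
/- Let n ≥ 5 and let μ_1, …, μ_n be rational numbers with 0 < μ_k < 1 for all k, such that μ_1 + ⋯ + μ_n is an integer and μ_k ≠ 1/2 for at least one k. Then there exist pairwise distinct indices h, i, s, t ∈ {1, …, n} with μ_h + μ_i ≠ 1 and μ_s + μ_t ≠ 1. -/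
/-- Five pairwise distinct indices, two of which have value `≠ 1/2`, always
contain two disjoint pairs each with sum `≠ 1`. -/
lemma five_aux {n : ℕ} (μ : Fin n → ℚ) (a b c d e : Fin n)
    (hab : a ≠ b) (hac : a ≠ c) (had : a ≠ d) (hae : a ≠ e)
    (hbc : b ≠ c) (hbd : b ≠ d) (hbe : b ≠ e)
    (hcd : c ≠ d) (hce : c ≠ e) (hde : d ≠ e)
    (ha : μ a ≠ 1 / 2) (hb : μ b ≠ 1 / 2) :
    ∃ h i s t : Fin n, h ≠ i ∧ h ≠ s ∧ h ≠ t ∧ i ≠ s ∧ i ≠ t ∧ s ≠ t ∧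
      μ h + μ i ≠ 1 ∧ μ s + μ t ≠ 1 := by
  by_cases hab1 : μ a + μ b = 1
  · by_cases hc1 : μ a + μ c = 1 <;> by_cases hd1 : μ a + μ d = 1 <;>
      by_cases he1 : μ a + μ e = 1
    · -- c, d, e all equal 1 - μ a
      refine ⟨b, c, d, e, ?_, ?_, ?_, ?_, ?_, ?_, ?_, ?_⟩ <;>
        first
        | assumption
        | (symm; assumption)
        | (intro H; apply ha; linarith)
        | (intro H; apply hb; linarith)
    · refine ⟨b, c, a, e, ?_, ?_, ?_, ?_, ?_, ?_, ?_, ?_⟩ <;>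
        first
        | assumption
        | (symm; assumption)
        | (intro H; apply ha; linarith)
        | (intro H; apply hb; linarith)
    · refine ⟨b, c, a, d, ?_, ?_, ?_, ?_, ?_, ?_, ?_, ?_⟩ <;>
        first
        | assumption
        | (symm; assumption)
        | (intro H; apply ha; linarith)
        | (intro H; apply hb; linarith)
    · refine ⟨b, c, a, d, ?_, ?_, ?_, ?_, ?_, ?_, ?_, ?_⟩ <;>
        first
        | assumption
        | (symm; assumption)
        | (intro H; apply ha; linarith)
        | (intro H; apply hb; linarith)
    · refine ⟨b, d, a, c, ?_, ?_, ?_, ?_, ?_, ?_, ?_, ?_⟩ <;>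
        first
        | assumption
        | (symm; assumption)
        | (intro H; apply ha; linarith)
        | (intro H; apply hb; linarith)
    · refine ⟨b, d, a, c, ?_, ?_, ?_, ?_, ?_, ?_, ?_, ?_⟩ <;>
        first
        | assumption
        | (symm; assumption)
        | (intro H; apply ha; linarith)
        | (intro H; apply hb; linarith)
    · refine ⟨b, e, a, c, ?_, ?_, ?_, ?_, ?_, ?_, ?_, ?_⟩ <;>
        first
        | assumption
        | (symm; assumption)
        | (intro H; apply ha; linarith)
        | (intro H; apply hb; linarith)
    · -- none of c, d, e equals 1 - μ a
      by_cases hde1 : μ d + μ e = 1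
      · by_cases hbd1 : μ b + μ d = 1
        · by_cases hbe1 : μ b + μ e = 1
          · exact absurd (by linarith : μ b = 1 / 2) hb
          · refine ⟨a, c, b, e, ?_, ?_, ?_, ?_, ?_, ?_, ?_, ?_⟩ <;>
              first
              | assumption
              | (symm; assumption)
              | (intro H; apply ha; linarith)
              | (intro H; apply hb; linarith)
        · refine ⟨a, c, b, d, ?_, ?_, ?_, ?_, ?_, ?_, ?_, ?_⟩ <;>
            first
            | assumption
            | (symm; assumption)
            | (intro H; apply ha; linarith)
            | (intro H; apply hb; linarith)
      · refine ⟨a, c, d, e, ?_, ?_, ?_, ?_, ?_, ?_, ?_, ?_⟩ <;>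
          first
          | assumption
          | (symm; assumption)
          | (intro H; apply ha; linarith)
          | (intro H; apply hb; linarith)
  · -- μ a + μ b ≠ 1
    by_cases hcd1 : μ c + μ d = 1
    · by_cases hce1 : μ c + μ e = 1
      · by_cases hde1 : μ d + μ e = 1
        · -- c, d, e are all 1/2
          refine ⟨a, c, b, d, ?_, ?_, ?_, ?_, ?_, ?_, ?_, ?_⟩ <;>
            first
            | assumption
            | (symm; assumption)
            | (intro H; apply ha; linarith)
            | (intro H; apply hb; linarith)
        · refine ⟨a, b, d, e, ?_, ?_, ?_, ?_, ?_, ?_, ?_, ?_⟩ <;>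
            first
            | assumption
            | (symm; assumption)
            | (intro H; apply ha; linarith)
            | (intro H; apply hb; linarith)
      · refine ⟨a, b, c, e, ?_, ?_, ?_, ?_, ?_, ?_, ?_, ?_⟩ <;>
          first
          | assumption
          | (symm; assumption)
          | (intro H; apply ha; linarith)
          | (intro H; apply hb; linarith)
    · refine ⟨a, b, c, d, ?_, ?_, ?_, ?_, ?_, ?_, ?_, ?_⟩ <;>
        first
        | assumption
        | (symm; assumption)
        | (intro H; apply ha; linarith)
        | (intro H; apply hb; linarith)

theorem stmt_4 (n : ℕ) (hn : 5 ≤ n) (μ : Fin n → ℚ)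
    (h0 : ∀ k, 0 < μ k) (h1 : ∀ k, μ k < 1)
    (hsum : ∃ N : ℤ, ∑ k, μ k = N)
    (hne : ∃ k, μ k ≠ 1 / 2) :
    ∃ h i s t : Fin n, h ≠ i ∧ h ≠ s ∧ h ≠ t ∧ i ≠ s ∧ i ≠ t ∧ s ≠ t ∧
      μ h + μ i ≠ 1 ∧ μ s + μ t ≠ 1 := by
  obtain ⟨a, ha⟩ := hne
  -- Step 1: there is a second index b ≠ a with μ b ≠ 1/2
  have hb' : ∃ b, b ≠ a ∧ μ b ≠ 1 / 2 := by
    by_contra hcon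
    push_neg at hcon
    obtain ⟨N, hN⟩ := hsum
    have hsplit : ∑ k, μ k = μ a + ∑ k ∈ Finset.univ.erase a, μ k :=
      (Finset.add_sum_erase _ μ (Finset.mem_univ a)).symm
    have hrest : ∑ k ∈ Finset.univ.erase a, μ k =
        (Finset.univ.erase a).card • (1 / 2 : ℚ) := by
      rw [Finset.sum_congr rfl fun x hx => hcon x (Finset.mem_erase.mp hx).1,
        Finset.sum_const]
    have hcard : (Finset.univ.erase a).card = n - 1 := by
      rw [Finset.card_erase_of_mem (Finset.mem_univ a), Finset.card_univ,
        Fintype.card_fin]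
    rw [hcard] at hrest
    have hn1 : ((n - 1 : ℕ) : ℚ) = (n : ℚ) - 1 := by
      have : (1 : ℕ) ≤ n := by omega
      push_cast [Nat.cast_sub this]
      ring
    have hma : 2 * μ a = ((2 * N - n + 1 : ℤ) : ℚ) := by
      rw [hsplit, hrest] at hN
      rw [nsmul_eq_mul, hn1] at hN
      push_cast
      linarith
    have h0a := h0 a
    have h1a := h1 a
    have hlt : (0 : ℚ) < ((2 * N - n + 1 : ℤ) : ℚ) ∧
        ((2 * N - n + 1 : ℤ) : ℚ) < 2 := by
      constructor <;> [linarith [hma]; linarith [hma]]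
    have hz : (0 : ℤ) < 2 * N - n + 1 ∧ 2 * N - n + 1 < 2 := by
      exact_mod_cast hlt
    have : 2 * N - n + 1 = 1 := by omega
    rw [this] at hma
    apply ha
    push_cast at hma
    linarith
  obtain ⟨b, hba, hb⟩ := hb'
  -- Step 2: pick c, d, e distinct from a, b and each other
  have hcard2 : ({a, b} : Finset (Fin n)).card ≤ 2 :=
    (Finset.card_insert_le a {b}).trans (by simp)
  have hs1 : 1 ≤ (Finset.univ \ {a, b} : Finset (Fin n)).card := by
    rw [Finset.card_sdiff_of_subset (Finset.subset_univ _), Finset.card_univ,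
      Fintype.card_fin]
    omega
  obtain ⟨c, hcmem⟩ := Finset.card_pos.mp hs1
  have hs2 : 1 ≤ ((Finset.univ \ {a, b} : Finset (Fin n)).erase c).card := by
    rw [Finset.card_erase_of_mem hcmem, Finset.card_sdiff_of_subset (Finset.subset_univ _),
      Finset.card_univ, Fintype.card_fin]
    omega
  obtain ⟨d, hdmem⟩ := Finset.card_pos.mp hs2
  have hs3 : 1 ≤
      (((Finset.univ \ {a, b} : Finset (Fin n)).erase c).erase d).card := by
    rw [Finset.card_erase_of_mem hdmem, Finset.card_erase_of_mem hcmem,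
      Finset.card_sdiff_of_subset (Finset.subset_univ _), Finset.card_univ,
      Fintype.card_fin]
    omega
  obtain ⟨e, hemem⟩ := Finset.card_pos.mp hs3
  -- unpack memberships to distinctness
  have hed : e ≠ d := (Finset.mem_erase.mp hemem).1
  have hemem' := (Finset.mem_erase.mp hemem).2
  have hec : e ≠ c := (Finset.mem_erase.mp hemem').1
  have hemem'' := (Finset.mem_erase.mp hemem').2
  have hdc : d ≠ c := (Finset.mem_erase.mp hdmem).1
  have hdmem' := (Finset.mem_erase.mp hdmem).2
  have hcab : c ≠ a ∧ c ≠ b := by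
    have := (Finset.mem_sdiff.mp hcmem).2
    simp only [Finset.mem_insert, Finset.mem_singleton] at this
    tauto
  have hdab : d ≠ a ∧ d ≠ b := by
    have := (Finset.mem_sdiff.mp hdmem').2
    simp only [Finset.mem_insert, Finset.mem_singleton] at this
    tauto
  have heab : e ≠ a ∧ e ≠ b := by
    have := (Finset.mem_sdiff.mp hemem'').2
    simp only [Finset.mem_insert, Finset.mem_singleton] at this
    tauto
  exact five_aux μ a b c d e hba.symm hcab.1.symm hdab.1.symm heab.1.symm
    hcab.2.symm hdab.2.symm heab.2.symm hdc.symm hec.symm hed.symm ha hb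
end

section
/- Let m and n be positive integers, let d_1, …, d_n be natural numbers with gcd(m, d_1, …, d_n) = 1 and with m dividing d_1 + ⋯ + d_n, and let j be an integer with m not dividing 2j. Let S = {k ∈ {1, …, n} : m ∤ j·d_k} and for k ∈ S put μ_k = fract(j·d_k/m) ∈ (0,1). If S contains at least 5 elements, then there exist pairwise distinct indices h, i, s, t ∈ S such that μ_h + μ_i ≠ 1 and μ_s + μ_t ≠ 1. -/
private lemma frac_zero_of_dvd' {m : ℕ} (hm : 0 < m) {a : ℤ} (h : (m:ℤ) ∣ a) :
    Int.fract ((a:ℚ)/m) = 0 := by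
  obtain ⟨c, rfl⟩ := h
  have hm0 : (m:ℚ) ≠ 0 := by positivity
  have : ((m*c : ℤ):ℚ)/m = (c:ℚ) := by push_cast; field_simp
  rw [this, Int.fract_intCast]

private lemma dvd_of_frac_zero' {m : ℕ} (hm : 0 < m) {a : ℤ}
    (h : Int.fract ((a:ℚ)/m) = 0) : (m:ℤ) ∣ a := by
  have hm0 : (m:ℚ) ≠ 0 := by positivity
  rw [Int.fract, sub_eq_zero] at h
  refine ⟨⌊(a:ℚ)/m⌋, ?_⟩
  have : (a:ℚ) = (m:ℚ) * (⌊(a:ℚ)/m⌋ : ℚ) := by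
    rw [← h]; field_simp
  exact_mod_cast this

private lemma dvd_of_frac_half' {m : ℕ} (hm : 0 < m) {a : ℤ}
    (h : Int.fract ((a:ℚ)/m) = 1/2) : (m:ℤ) ∣ 2*a := by
  have hm0 : (m:ℚ) ≠ 0 := by positivity
  rw [Int.fract] at h
  refine ⟨2*⌊(a:ℚ)/m⌋+1, ?_⟩
  have : (2*a:ℚ) = (m:ℚ) * (2*(⌊(a:ℚ)/m⌋:ℚ)+1) := by
    field_simp at h ⊢; linarith
  exact_mod_cast this

private lemma dvd_mul_gcd' {n : ℕ} (m : ℕ) (a : ℤ) (d : Fin n → ℕ) (s : Finset (Fin n))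
    (h : ∀ k ∈ s, (m:ℤ) ∣ a * d k) : (m:ℤ) ∣ a * ((s.gcd d : ℕ) : ℤ) := by
  classical
  induction s using Finset.induction_on with
  | empty => simp
  | insert i s hx ih =>
    skip
    rw [Finset.gcd_insert]
    have h1 : (m:ℤ) ∣ a * d i := h i (Finset.mem_insert_self _ _)
    have h2 : (m:ℤ) ∣ a * ((s.gcd d : ℕ) : ℤ) := ih (fun k hk => h k (Finset.mem_insert_of_mem hk))
    have key : (m:ℤ) ∣ (Int.gcd (a * d i) (a * ((s.gcd d : ℕ) : ℤ)) : ℤ) := Int.dvd_coe_gcd h1 h2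
    rw [Int.gcd_mul_left] at key
    have hg : (((GCDMonoid.gcd (d i) (s.gcd d) : ℕ)) : ℤ)
        = (Int.gcd ((d i : ℤ)) (((s.gcd d : ℕ) : ℤ)) : ℤ) := by
      simp
      rfl
    rw [show (GCDMonoid.gcd (d i) (s.gcd d) : ℕ) = Nat.gcd (d i) (s.gcd d) from rfl] at hg ⊢
    rw [hg]
    have habs : (↑(a.natAbs * Int.gcd (d i : ℤ) (((s.gcd d : ℕ)) : ℤ)) : ℤ)
        = |a * (Int.gcd (d i : ℤ) (((s.gcd d : ℕ)) : ℤ) : ℤ)| := by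
      push_cast
      rw [abs_mul, Int.abs_eq_natAbs]
      simp
    rw [habs] at key
    exact (dvd_abs _ _).mp key

theorem stmt_5 (m n : ℕ) (hm : 0 < m) (hn : 0 < n) (d : Fin n → ℕ)
    (hgcd : Nat.gcd m (Finset.univ.gcd d) = 1)
    (hdiv : m ∣ ∑ k, d k)
    (j : ℤ) (hj : ¬ ((m : ℤ) ∣ 2 * j))
    (S : Finset (Fin n))
    (hS : S = Finset.univ.filter (fun k => ¬ ((m : ℤ) ∣ j * (d k : ℤ))))
    (μ : Fin n → ℚ)
    (hμ : ∀ k, μ k = Int.fract ((j : ℚ) * (d k : ℚ) / (m : ℚ)))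
    (hcard : 5 ≤ S.card) :
    ∃ h i s t : Fin n, h ∈ S ∧ i ∈ S ∧ s ∈ S ∧ t ∈ S ∧
      h ≠ i ∧ h ≠ s ∧ h ≠ t ∧ i ≠ s ∧ i ≠ t ∧ s ≠ t ∧
      μ h + μ i ≠ 1 ∧ μ s + μ t ≠ 1 := by
  classical
  have hmQ : (m:ℚ) ≠ 0 := by positivity
  have hμ' : ∀ k, μ k = Int.fract (((j * (d k : ℤ) : ℤ):ℚ)/(m:ℚ)) := by
    intro k; rw [hμ k]; push_cast; ring_nf
  have hSmem : ∀ k ∈ S, ¬ ((m:ℤ) ∣ j * (d k : ℤ)) := by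
    intro k hk; rw [hS] at hk; exact (Finset.mem_filter.mp hk).2
  have hSmem' : ∀ k, k ∉ S → (m:ℤ) ∣ j * (d k : ℤ) := by
    intro k hk; rw [hS] at hk; simpa using hk
  have hpos : ∀ k ∈ S, 0 < μ k := by
    intro k hk
    rcases lt_or_eq_of_le (Int.fract_nonneg (((j * (d k : ℤ) : ℤ):ℚ)/(m:ℚ))) with h | h
    · rw [hμ' k]; exact h
    · exact absurd (dvd_of_frac_zero' hm h.symm) (hSmem k hk)
  have hlt1 : ∀ k, μ k < 1 := fun k => by rw [hμ' k]; exact Int.fract_lt_one _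
  have hhalf : ∀ k ∈ S, μ k = 1/2 → (m:ℤ) ∣ 2*(j*(d k : ℤ)) := by
    intro k hk h
    exact dvd_of_frac_half' hm (by rw [← hμ' k]; exact h)
  set N := S.filter (fun k => μ k ≠ 1/2) with hNdef
  -- Step 1: at least two elements of S have μ ≠ 1/2
  have hN2 : 2 ≤ N.card := by
    by_contra hlt2
    push_neg at hlt2
    interval_cases hc : N.card
    · -- all elements of S are halves: gcd argument
      have hNe : N = ∅ := Finset.card_eq_zero.mp hc
      have hallhalf : ∀ k ∈ S, μ k = 1/2 := by
        intro k hk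
        by_contra hk2
        have : k ∈ N := Finset.mem_filter.mpr ⟨hk, hk2⟩
        rw [hNe] at this; exact absurd this (Finset.notMem_empty k)
      have hall : ∀ k ∈ (Finset.univ : Finset (Fin n)), (m:ℤ) ∣ (2*j) * (d k : ℤ) := by
        intro k _
        by_cases hk : k ∈ S
        · have := hhalf k hk (hallhalf k hk)
          rwa [show (2*j) * (d k : ℤ) = 2*(j*(d k : ℤ)) by ring]
        · have := hSmem' k hk
          rw [show (2*j) * (d k : ℤ) = 2*(j*(d k : ℤ)) by ring]
          exact this.mul_left 2
      have hdvd := dvd_mul_gcd' m (2*j) d Finset.univ hall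
      have hco : IsCoprime (m:ℤ) ((Finset.univ.gcd d : ℕ):ℤ) := by
        rw [Int.isCoprime_iff_gcd_eq_one]
        simpa using hgcd
      exact hj (hco.dvd_of_dvd_mul_right hdvd)
    · -- exactly one non-half: sum argument
      obtain ⟨t, hNt⟩ := Finset.card_eq_one.mp hc
      have htN : t ∈ N := by rw [hNt]; exact Finset.mem_singleton_self t
      have htS : t ∈ S := (Finset.mem_filter.mp htN).1
      have ht2 : μ t ≠ 1/2 := (Finset.mem_filter.mp htN).2
      obtain ⟨c, hcc⟩ := hdiv
      -- the sum of μ over S is an integer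
      have hzsum : ∃ z : ℤ, ∑ k ∈ S, μ k = (z:ℚ) := by
        refine ⟨j*c - ∑ k, ⌊((j*(d k : ℤ) : ℤ):ℚ)/(m:ℚ)⌋, ?_⟩
        have e1 : ∑ k ∈ S, μ k = ∑ k, μ k := by
          apply Finset.sum_subset (Finset.subset_univ S)
          intro k _ hk
          rw [hμ' k]
          exact frac_zero_of_dvd' hm (hSmem' k hk)
        rw [e1]
        have e2 : ∑ k, μ k = (∑ k, ((j*(d k : ℤ) : ℤ):ℚ)/(m:ℚ))
            - ∑ k, (⌊((j*(d k : ℤ) : ℤ):ℚ)/(m:ℚ)⌋ : ℚ) := by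
          rw [← Finset.sum_sub_distrib]
          exact Finset.sum_congr rfl (fun k _ => by rw [hμ' k]; rfl)
        have e3 : ∑ k, ((j*(d k : ℤ) : ℤ):ℚ)/(m:ℚ) = (j:ℚ) * (c:ℚ) := by
          have : ∑ k, ((j*(d k : ℤ) : ℤ):ℚ)/(m:ℚ) = ((j:ℚ) * ∑ k, (d k : ℚ))/(m:ℚ) := by
            rw [Finset.mul_sum, Finset.sum_div]
            exact Finset.sum_congr rfl (fun k _ => by push_cast; ring)
          rw [this]
          have hsd : (∑ k, (d k : ℚ)) = (m:ℚ) * (c:ℚ) := by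
            have : ((∑ k, d k : ℕ) : ℚ) = ((m*c : ℕ) : ℚ) := by rw [hcc]
            push_cast at this
            simpa using this
          rw [hsd]
          field_simp
        rw [e2, e3]
        push_cast
        ring
      obtain ⟨z, hz⟩ := hzsum
      have esum : ∑ k ∈ S, μ k = μ t + ((S.card - 1 : ℕ) : ℚ) * (1/2) := by
        rw [← Finset.add_sum_erase S μ htS]
        congr 1
        have : ∀ k ∈ S.erase t, μ k = 1/2 := by
          intro k hk
          have hkS : k ∈ S := Finset.mem_of_mem_erase hk
          have hkt : k ≠ t := Finset.ne_of_mem_erase hk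
          by_contra hk2
          have : k ∈ N := Finset.mem_filter.mpr ⟨hkS, hk2⟩
          rw [hNt, Finset.mem_singleton] at this
          exact hkt this
        rw [Finset.sum_congr rfl this, Finset.sum_const, Finset.card_erase_of_mem htS]
        simp [mul_comm]
      have h1le : 1 ≤ S.card := by omega
      have hw : ((2*z - (S.card : ℤ) + 1 : ℤ) : ℚ) = 2 * μ t := by
        rw [esum] at hz
        push_cast [Nat.cast_sub h1le] at hz ⊢
        linarith
      have h0 : (0:ℚ) < ((2*z - (S.card : ℤ) + 1 : ℤ) : ℚ) := by
        rw [hw]; linarith [hpos t htS]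
      have h2 : ((2*z - (S.card : ℤ) + 1 : ℤ) : ℚ) < 2 := by
        rw [hw]; linarith [hlt1 t]
      have h0' : (0:ℤ) < 2*z - (S.card : ℤ) + 1 := by exact_mod_cast h0
      have h2' : (2*z - (S.card : ℤ) + 1 : ℤ) < 2 := by exact_mod_cast h2
      have : (2*z - (S.card : ℤ) + 1 : ℤ) = 1 := by omega
      rw [this] at hw
      exact ht2 (by push_cast at hw; linarith)
  -- Step 2: pick two non-halves a, b and three more elements p, q, r
  obtain ⟨a, haN, b, hbN, hab⟩ := Finset.one_lt_card.mp hN2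
  have haS : a ∈ S := (Finset.mem_filter.mp haN).1
  have ha2 : μ a ≠ 1/2 := (Finset.mem_filter.mp haN).2
  have hbS : b ∈ S := (Finset.mem_filter.mp hbN).1
  have hb2 : μ b ≠ 1/2 := (Finset.mem_filter.mp hbN).2
  have hsub : ({a,b} : Finset (Fin n)) ⊆ S := by
    intro x hx
    rcases Finset.mem_insert.mp hx with h | h
    · rwa [h]
    · rw [Finset.mem_singleton.mp h]; exact hbS
  have h3 : 3 ≤ (S \ {a,b}).card := by
    rw [Finset.card_sdiff_of_subset hsub, Finset.card_pair hab]
    omega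
  obtain ⟨T, hTsub, hT3⟩ := Finset.exists_subset_card_eq h3
  obtain ⟨p, q, r, hpq, hpr, hqr, hTeq⟩ := Finset.card_eq_three.mp hT3
  have hpmem : p ∈ S \ ({a,b} : Finset (Fin n)) := hTsub (by rw [hTeq]; simp)
  have hqmem : q ∈ S \ ({a,b} : Finset (Fin n)) := hTsub (by rw [hTeq]; simp)
  have hrmem : r ∈ S \ ({a,b} : Finset (Fin n)) := hTsub (by rw [hTeq]; simp)
  obtain ⟨hpS, hpab⟩ := Finset.mem_sdiff.mp hpmem
  obtain ⟨hqS, hqab⟩ := Finset.mem_sdiff.mp hqmem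
  obtain ⟨hrS, hrab⟩ := Finset.mem_sdiff.mp hrmem
  simp only [Finset.mem_insert, Finset.mem_singleton, not_or] at hpab hqab hrab
  obtain ⟨hpa, hpb⟩ := hpab
  obtain ⟨hqa, hqb⟩ := hqab
  obtain ⟨hra, hrb⟩ := hrab
  -- among a, b, x one pair is good, for any x
  have key : ∀ x : Fin n, μ a + μ b ≠ 1 ∨ μ a + μ x ≠ 1 ∨ μ b + μ x ≠ 1 := by
    intro x
    by_contra h
    push_neg at h
    exact hb2 (by linarith [h.1, h.2.1, h.2.2])
  by_cases h1 : μ p + μ q = 1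
  · by_cases h2 : μ p + μ r = 1
    · by_cases h3' : μ q + μ r = 1
      · -- p, q, r all halves; use pairs (a,p) and (b,q)
        have hp2 : μ p = 1/2 := by linarith
        have hq2 : μ q = 1/2 := by linarith
        exact ⟨a, p, b, q, haS, hpS, hbS, hqS, (Ne.symm hpa), hab, (Ne.symm hqa), hpb, hpq,
          (Ne.symm hqb), fun H => ha2 (by linarith), fun H => hb2 (by linarith)⟩
      · -- (q,r) good; find a good pair among a,b,p
        rcases key p with hg | hg | hg
        · exact ⟨a, b, q, r, haS, hbS, hqS, hrS, hab, (Ne.symm hqa), (Ne.symm hra), (Ne.symm hqb),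
            (Ne.symm hrb), hqr, hg, h3'⟩
        · exact ⟨a, p, q, r, haS, hpS, hqS, hrS, (Ne.symm hpa), (Ne.symm hqa), (Ne.symm hra), hpq,
            hpr, hqr, hg, h3'⟩
        · exact ⟨b, p, q, r, hbS, hpS, hqS, hrS, (Ne.symm hpb), (Ne.symm hqb), (Ne.symm hrb), hpq,
            hpr, hqr, hg, h3'⟩
    · -- (p,r) good; find a good pair among a,b,q
      rcases key q with hg | hg | hg
      · exact ⟨a, b, p, r, haS, hbS, hpS, hrS, hab, (Ne.symm hpa), (Ne.symm hra), (Ne.symm hpb),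
          (Ne.symm hrb), hpr, hg, h2⟩
      · exact ⟨a, q, p, r, haS, hqS, hpS, hrS, (Ne.symm hqa), (Ne.symm hpa), (Ne.symm hra), (Ne.symm hpq),
          hqr, hpr, hg, h2⟩
      · exact ⟨b, q, p, r, hbS, hqS, hpS, hrS, (Ne.symm hqb), (Ne.symm hpb), (Ne.symm hrb), (Ne.symm hpq),
          hqr, hpr, hg, h2⟩
  · -- (p,q) good; find a good pair among a,b,r
    rcases key r with hg | hg | hg
    · exact ⟨a, b, p, q, haS, hbS, hpS, hqS, hab, (Ne.symm hpa), (Ne.symm hqa), (Ne.symm hpb),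
        (Ne.symm hqb), hpq, hg, h1⟩
    · exact ⟨a, r, p, q, haS, hrS, hpS, hqS, (Ne.symm hra), (Ne.symm hpa), (Ne.symm hqa), (Ne.symm hpr),
        (Ne.symm hqr), hpq, hg, h1⟩
    · exact ⟨b, r, p, q, hbS, hrS, hpS, hqS, (Ne.symm hrb), (Ne.symm hpb), (Ne.symm hqb), (Ne.symm hpr),
        (Ne.symm hqr), hpq, hg, h1⟩
end

section
/- Let n ≥ 3, let d_1, …, d_n and m be natural numbers such that gcd(m, gcd(d_1, …, d_n)) = 1, and let w be a positive divisor of m such that w divides d_i + d_j for all pairs of distinct indices i ≠ j. Then w divides 2. -/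
theorem stmt_6 (n : ℕ) (hn : 3 ≤ n) (d : Fin n → ℕ) (m : ℕ)
    (hgcd : Nat.gcd m (Finset.univ.gcd d) = 1)
    (w : ℕ) (hw : 0 < w) (hwm : w ∣ m)
    (hpair : ∀ i j : Fin n, i ≠ j → w ∣ d i + d j) :
    w ∣ 2 := by
  set i0 : Fin n := ⟨0, by omega⟩
  set i1 : Fin n := ⟨1, by omega⟩
  set i2 : Fin n := ⟨2, by omega⟩
  have h2 : ∀ k : Fin n, w ∣ 2 * d k := by
    intro k
    obtain ⟨a, b, hab, ha, hb⟩ : ∃ a b : Fin n, a ≠ b ∧ a ≠ k ∧ b ≠ k := by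
      by_cases h0 : k = i0
      · exact ⟨i1, i2, by simp [i1, i2, Fin.ext_iff], by simp [h0, i0, i1, Fin.ext_iff],
          by simp [h0, i0, i2, Fin.ext_iff]⟩
      · by_cases h1 : k = i1
        · exact ⟨i0, i2, by simp [i0, i2, Fin.ext_iff], by simp [h1, i0, i1, Fin.ext_iff],
            by simp [h1, i1, i2, Fin.ext_iff]⟩
        · exact ⟨i0, i1, by simp [i0, i1, Fin.ext_iff], fun h => h0 h.symm, fun h => h1 h.symm⟩
    have hsum : w ∣ (d k + d a) + (d k + d b) :=
      Nat.dvd_add (hpair k a ha.symm) (hpair k b hb.symm)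
    have hab' : w ∣ d a + d b := hpair a b hab
    have := Nat.dvd_sub hsum hab'
    have heq : (d k + d a) + (d k + d b) - (d a + d b) = 2 * d k := by omega
    rwa [heq] at this
  have hg : w ∣ 2 * Finset.univ.gcd d := by
    have := Finset.dvd_gcd (s := (Finset.univ : Finset (Fin n))) fun k _ => h2 k
    simpa [Finset.gcd_mul_left] using this
  have hdvd : w ∣ Nat.gcd (2 * m) (2 * Finset.univ.gcd d) :=
    Nat.dvd_gcd (hwm.trans (dvd_mul_left m 2)) hg
  rwa [Nat.gcd_mul_left, hgcd, mul_one] at hdvd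
end

section
/- Let n ≥ 5 and let μ_1, …, μ_n be rational numbers with 0 < μ_k < 1 for all k and with μ_1 + ⋯ + μ_n an integer. Assume that not all of μ_3, …, μ_n are equal to 1/2. Then the set {3, …, n} can be partitioned into two nonempty subsets B and C such that Σ_{k∈B} μ_k is not an integer and Σ_{k∈C} μ_k is not an integer; equivalently, there is a stable partition P of {1, …, n} (with respect to the μ_k) with {1} ∈ P, {2} ∈ P, and |P| = 4. -/
private lemma no_int_Ioo (q : ℚ) (h0 : 0 < q) (h1 : q < 1) : ¬ ∃ z : ℤ, q = z := by
  rintro ⟨z, rfl⟩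
  have hz0 : 0 < z := by exact_mod_cast h0
  have hz1 : z < 1 := by exact_mod_cast h1
  omega

theorem stmt_10 (n : ℕ) (hn : 5 ≤ n) (μ : Fin n → ℚ)
    (h0 : ∀ k, 0 < μ k) (h1 : ∀ k, μ k < 1)
    (hsum : ∃ N : ℤ, ∑ k, μ k = N)
    (hne : ∃ k : Fin n, 2 ≤ (k : ℕ) ∧ μ k ≠ 1 / 2) :
    ∃ B C : Finset (Fin n),
      B ∪ C = Finset.univ.filter (fun k : Fin n => 2 ≤ (k : ℕ)) ∧
      Disjoint B C ∧ B.Nonempty ∧ C.Nonempty ∧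
      (¬ ∃ z : ℤ, ∑ k ∈ B, μ k = z) ∧ (¬ ∃ z : ℤ, ∑ k ∈ C, μ k = z) := by
  set S : Finset (Fin n) := Finset.univ.filter (fun k : Fin n => 2 ≤ (k : ℕ)) with hS
  set T : ℚ := ∑ k ∈ S, μ k with hT
  have hmemS : ∀ k : Fin n, k ∈ S ↔ 2 ≤ (k : ℕ) := by
    intro k; simp [hS]
  have a2 : (⟨2, by omega⟩ : Fin n) ∈ S := by rw [hmemS]
  have a3 : (⟨3, by omega⟩ : Fin n) ∈ S := by rw [hmemS]; norm_num
  have a4 : (⟨4, by omega⟩ : Fin n) ∈ S := by rw [hmemS]; norm_num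
  have hcard : 3 ≤ S.card := by
    have hsub : ({⟨2, by omega⟩, ⟨3, by omega⟩, ⟨4, by omega⟩} : Finset (Fin n)) ⊆ S := by
      intro x hx
      simp only [Finset.mem_insert, Finset.mem_singleton] at hx
      rcases hx with rfl | rfl | rfl <;> assumption
    have hc : ({⟨2, by omega⟩, ⟨3, by omega⟩, ⟨4, by omega⟩} : Finset (Fin n)).card = 3 := by
      rw [Finset.card_insert_of_notMem, Finset.card_insert_of_notMem,
        Finset.card_singleton] <;> simp [Fin.ext_iff]
    calc 3 = _ := hc.symm
      _ ≤ S.card := Finset.card_le_card hsub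
  by_cases hall : ∀ j ∈ S, ∃ z : ℤ, T - μ j = z
  · -- all complements are integers: all μ equal on S
    obtain ⟨k0, hk0S, hk0ne⟩ := hne
    rw [← hmemS] at hk0S
    have herase : (S.erase k0).Nonempty := by
      rw [← Finset.card_pos, Finset.card_erase_of_mem hk0S]; omega
    obtain ⟨j, hj⟩ := herase
    have hjS : j ∈ S := Finset.mem_of_mem_erase hj
    have hjne : j ≠ k0 := Finset.ne_of_mem_erase hj
    obtain ⟨z1, hz1⟩ := hall k0 hk0S
    obtain ⟨z2, hz2⟩ := hall j hjS
    have hdiff : μ k0 - μ j = (z2 : ℚ) - z1 := by linarith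
    have heq : μ j = μ k0 := by
      have hb1 : (-1 : ℚ) < (z2 : ℚ) - z1 := by
        have := h0 k0; have := h1 j; linarith
      have hb2 : ((z2 : ℚ) - z1) < 1 := by
        have := h1 k0; have := h0 j; linarith
      have e1 : (-1 : ℤ) < z2 - z1 := by exact_mod_cast (by push_cast; linarith : (-1:ℚ) < ((z2 - z1 : ℤ) : ℚ))
      have e2 : (z2 - z1 : ℤ) < 1 := by exact_mod_cast (by push_cast; linarith : ((z2 - z1 : ℤ) : ℚ) < 1)
      have : z2 = z1 := by omega
      subst this; linarith
    refine ⟨{k0, j}, S \ {k0, j}, ?_, Finset.disjoint_sdiff, ⟨k0, by simp⟩, ?_, ?_, ?_⟩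
    · rw [Finset.union_sdiff_of_subset]
      intro x hx
      simp only [Finset.mem_insert, Finset.mem_singleton] at hx
      rcases hx with rfl | rfl <;> assumption
    · rw [← Finset.card_pos, Finset.card_sdiff_of_subset (by
        intro x hx
        simp only [Finset.mem_insert, Finset.mem_singleton] at hx
        rcases hx with rfl | rfl <;> assumption)]
      have : ({k0, j} : Finset (Fin n)).card ≤ 2 := Finset.card_insert_le _ _ |>.trans (by simp)
      omega
    · rw [Finset.sum_pair (Ne.symm hjne), heq]
      rintro ⟨z, hz⟩
      have hzgt : (0:ℤ) < z := by exact_mod_cast (by have := h0 k0; linarith : (0:ℚ) < (z:ℚ))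
      have hzlt : z < 2 := by exact_mod_cast (by have := h1 k0; linarith : (z:ℚ) < 2)
      have : z = 1 := by omega
      subst this
      apply hk0ne
      have : μ k0 + μ k0 = 1 := by exact_mod_cast hz
      linarith
    · rw [Finset.sum_sdiff_eq_sub (by
        intro x hx
        simp only [Finset.mem_insert, Finset.mem_singleton] at hx
        rcases hx with rfl | rfl <;> assumption)]
      rw [Finset.sum_pair (Ne.symm hjne), heq]
      rintro ⟨z, hz⟩
      -- T - 2 μ k0 = z, and T - μ k0 = z1, so μ k0 = z1 - z ∈ ℤ, contradiction
      have : μ k0 = (z1 : ℚ) - z := by linarith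
      exact no_int_Ioo (μ k0) (h0 k0) (h1 k0) ⟨z1 - z, by push_cast; linarith⟩
  · push_neg at hall
    obtain ⟨j, hjS, hj⟩ := hall
    refine ⟨{j}, S.erase j, ?_, ?_, ⟨j, by simp⟩, ?_, ?_, ?_⟩
    · rw [← Finset.insert_eq, Finset.insert_erase hjS]
    · simp
    · rw [← Finset.card_pos, Finset.card_erase_of_mem hjS]; omega
    · rw [Finset.sum_singleton]; exact no_int_Ioo (μ j) (h0 j) (h1 j)
    · rw [Finset.sum_erase_eq_sub hjS]; rintro ⟨z, hz⟩; exact hj z hz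
end

section
/- Let n ≥ 1, m ≥ 2, and a₁, …, a_{2m} ∈ ℂ. Set F = y_n^m + ⋯ + y_1^m + ∏_{i=1}^{2m}(x₁ − a_i·x₀) ∈ ℂ[x₀, x₁, y₁, …, y_n], and let φ : ℂ[z₁, …, z_{n+3}] → ℂ[x₀, x₁, y₁, …, y_n] be the ℂ-algebra homomorphism with φ(z₁) = x₀², φ(z₂) = x₀x₁, φ(z₃) = x₁², φ(z_{3+i}) = y_i for i = 1, …, n. Then there exists a homogeneous polynomial G ∈ ℂ[z₁, z₂, z₃] of degree m with G(x₀², x₀x₁, x₁²) = ∏_{i=1}^{2m}(x₁ − a_i·x₀), and for any such G, putting h = z_{n+3}^m + ⋯ + z₄^m + G, the preimage φ⁻¹((F)) of the principal ideal generated by F equals the ideal generated by h and f = z₁z₃ − z₂². -/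
open MvPolynomial

set_option maxRecDepth 10000

noncomputable section Aux14

abbrev R2 (n : ℕ) := MvPolynomial (Fin 2 ⊕ Fin n) ℂ
abbrev R3 (n : ℕ) := MvPolynomial (Fin 3 ⊕ Fin n) ℂ

def vmap (n : ℕ) : Fin 3 ⊕ Fin n → R2 n :=
  Sum.elim
    ![(X (Sum.inl 0) : R2 n) ^ 2, X (Sum.inl 0) * X (Sum.inl 1), (X (Sum.inl 1)) ^ 2]
    (fun j => X (Sum.inr j))

def wmap (n : ℕ) : Fin 2 ⊕ Fin n → R2 n :=
  Sum.elim ![(X (Sum.inl 0) : R2 n) ^ 2, (X (Sum.inl 1)) ^ 2] (fun j => X (Sum.inr j))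

def emap (n : ℕ) : Fin 2 ⊕ Fin n → Fin 3 ⊕ Fin n :=
  Sum.elim ![Sum.inl 0, Sum.inl 2] Sum.inr

def fpoly (n : ℕ) : R3 n := X (Sum.inl 0) * X (Sum.inl 2) - (X (Sum.inl 1)) ^ 2

lemma vmap_comp_emap (n : ℕ) : vmap n ∘ emap n = wmap n := by
  funext i
  rcases i with k | j
  · fin_cases k <;> simp [vmap, emap, wmap]
  · simp [vmap, emap, wmap]

def εmap (n : ℕ) : (Fin 3 ⊕ Fin n) ≃ Option (Fin 2 ⊕ Fin n) where
  toFun := Sum.elim ![some (Sum.inl 0), none, some (Sum.inl 1)] (fun j => some (Sum.inr j))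
  invFun := fun o => o.elim (Sum.inl 1) (emap n)
  left_inv := by
    rintro (k | j)
    · fin_cases k <;> simp [emap]
    · simp [emap]
  right_inv := by
    rintro (_ | (k | j))
    · simp
    · fin_cases k <;> simp [emap]
    · simp [emap]

lemma εmap_comp_emap (n : ℕ) : εmap n ∘ emap n = some := by
  funext i
  rcases i with k | j
  · fin_cases k <;> simp [εmap, emap]
  · simp [εmap, emap]

def κmap (n : ℕ) : R3 n ≃ₐ[ℂ] Polynomial (R2 n) :=
  (renameEquiv ℂ (εmap n)).trans (optionEquivLeft ℂ (Fin 2 ⊕ Fin n))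

lemma κmap_rename (n : ℕ) (s : R2 n) :
    κmap n (rename (emap n) s) = Polynomial.C s := by
  induction s using MvPolynomial.induction_on with
  | C c => simp [κmap, optionEquivLeft_C]
  | add p q hp hq => simp [map_add, hp, hq]
  | mul_X p i hp =>
    rw [map_mul, map_mul, hp]
    have : (εmap n) (emap n i) = some i := congrFun (εmap_comp_emap n) i
    simp [κmap, this, optionEquivLeft_X_some]

lemma κmap_symm_C (n : ℕ) (s : R2 n) :
    (κmap n).symm (Polynomial.C s) = rename (emap n) s := by
  rw [← κmap_rename n s, AlgEquiv.symm_apply_apply]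

lemma κmap_symm_X (n : ℕ) :
    (κmap n).symm Polynomial.X = X (Sum.inl 1) := by
  have h : κmap n (X (Sum.inl 1)) = Polynomial.X := by
    have : (εmap n) (Sum.inl 1) = none := by simp [εmap]
    simp [κmap, this, optionEquivLeft_X_none]
  rw [← h, AlgEquiv.symm_apply_apply]

/-- Division by `z₂² - z₁z₃`. -/
lemma decomp (n : ℕ) (p : R3 n) :
    ∃ u r₀ r₁, p = u * fpoly n + rename (emap n) r₀ + X (Sum.inl 1) * rename (emap n) r₁ := by
  set κ := κmap n
  set c2 : R2 n := X (Sum.inl 0) * X (Sum.inl 1) with hc2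
  set dv : Polynomial (R2 n) := Polynomial.X ^ 2 - Polynomial.C c2 with hdv
  have hmon : dv.Monic := Polynomial.monic_X_pow_sub_C c2 (by norm_num)
  set P := κ p with hP
  have hkey : P %ₘ dv + dv * (P /ₘ dv) = P := Polynomial.modByMonic_add_div P dv
  have hdeg : (P %ₘ dv).degree < 2 := by
    have := Polynomial.degree_modByMonic_lt P hmon
    rwa [hdv, Polynomial.degree_X_pow_sub_C (by norm_num)] at this
  have hdeg1 : (P %ₘ dv).degree ≤ 1 := Order.le_of_lt_succ (by exact_mod_cast hdeg)
  obtain ⟨r0, r1, hR⟩ : ∃ r0 r1, P %ₘ dv = Polynomial.C r1 * Polynomial.X + Polynomial.C r0 :=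
    ⟨_, _, Polynomial.eq_X_add_C_of_degree_le_one hdeg1⟩
  refine ⟨-(κ.symm (P /ₘ dv)), r0, r1, ?_⟩
  have hp : p = κ.symm (P %ₘ dv) + κ.symm dv * κ.symm (P /ₘ dv) := by
    conv_lhs => rw [← AlgEquiv.symm_apply_apply κ p, ← hP, ← hkey]
    rw [map_add, map_mul]
  have hdv' : κ.symm dv = - fpoly n := by
    rw [hdv, map_sub, map_pow, κmap_symm_X, κmap_symm_C, fpoly]
    rw [hc2, map_mul, rename_X, rename_X]
    simp [emap]
  rw [hp, hdv', hR, map_add, map_mul, κmap_symm_C, κmap_symm_C, κmap_symm_X]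
  ring

lemma eval_aeval' {n : ℕ} (g : Fin 2 ⊕ Fin n → ℂ) (w : Fin 2 ⊕ Fin n → R2 n)
    (p : R2 n) : eval g (aeval w p) = eval (fun i => eval g (w i)) p := by
  rw [aeval_def, algebraMap_eq, ← eval_assoc]
  rfl

lemma theta_inj {n : ℕ} (r0 r1 : R2 n)
    (h : aeval (wmap n) r0 + X (Sum.inl 0) * X (Sum.inl 1) * aeval (wmap n) r1 = 0) :
    r0 = 0 ∧ r1 = 0 := by
  have key2 : ∀ (s t : ℂ) (u : Fin 2 ⊕ Fin n → ℂ),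
      eval (Sum.elim ![s ^ 2, t ^ 2] (fun j => u (Sum.inr j))) r0
        + s * t * eval (Sum.elim ![s ^ 2, t ^ 2] (fun j => u (Sum.inr j))) r1 = 0 := by
    intro s t u
    have hfun : (fun i => eval (Sum.elim ![s, t] (fun j => u (Sum.inr j))) (wmap n i))
        = Sum.elim ![s ^ 2, t ^ 2] (fun j => u (Sum.inr j)) := by
      funext i
      rcases i with k | j
      · fin_cases k <;> simp [wmap]
      · simp [wmap]
    have := congrArg (eval (Sum.elim ![s, t] (fun j => u (Sum.inr j)))) h
    rw [map_add, map_mul, map_mul, map_zero, eval_aeval', eval_aeval', hfun, eval_X,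
      eval_X] at this
    simpa using this
  have sq : ∀ z : ℂ, ∃ s : ℂ, s ^ 2 = z := fun z => IsAlgClosed.exists_pow_nat_eq z (by norm_num)
  have hr0 : r0 = 0 := by
    apply MvPolynomial.funext
    intro u
    obtain ⟨s, hs⟩ := sq (u (Sum.inl 0))
    obtain ⟨t, ht⟩ := sq (u (Sum.inl 1))
    have hu : (Sum.elim ![s ^ 2, t ^ 2] fun j => u (Sum.inr j)) = u := by
      funext i
      rcases i with k | j
      · fin_cases k <;> simp [hs, ht]
      · simp
    have h1 := key2 s t u
    have h2 := key2 (-s) t u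
    rw [show ((-s) : ℂ) ^ 2 = s ^ 2 by ring] at h2
    rw [hu] at h1 h2
    simp only [map_zero]
    linear_combination (h1 + h2) / 2
  refine ⟨hr0, ?_⟩
  subst hr0
  have hmul : (X (Sum.inl 0) : R2 n) * X (Sum.inl 1) * r1 = 0 := by
    apply MvPolynomial.funext
    intro u
    obtain ⟨s, hs⟩ := sq (u (Sum.inl 0))
    obtain ⟨t, ht⟩ := sq (u (Sum.inl 1))
    have hu : (Sum.elim ![s ^ 2, t ^ 2] fun j => u (Sum.inr j)) = u := by
      funext i
      rcases i with k | j
      · fin_cases k <;> simp [hs, ht]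
      · simp
    have h1 := key2 s t u
    rw [hu] at h1
    simp only [map_zero] at h1 ⊢
    rw [map_mul, map_mul, eval_X, eval_X, ← hs, ← ht]
    simp only [map_zero, zero_add] at h1
    linear_combination s * t * h1
  rcases mul_eq_zero.mp hmul with h' | h'
  · rcases mul_eq_zero.mp h' with h'' | h''
    · exact absurd h'' (MvPolynomial.X_ne_zero _)
    · exact absurd h'' (MvPolynomial.X_ne_zero _)
  · exact h'

def smap (n : ℕ) : Fin 2 ⊕ Fin n → R2 n :=
  Sum.elim ![-(X (Sum.inl 0) : R2 n), -(X (Sum.inl 1))] (fun j => X (Sum.inr j))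

def sgm (n : ℕ) : R2 n →ₐ[ℂ] R2 n := aeval (smap n)

lemma sgm_comp_vmap (n : ℕ) (i : Fin 3 ⊕ Fin n) : sgm n (vmap n i) = vmap n i := by
  rcases i with k | j
  · fin_cases k <;> simp [sgm, vmap, smap]
  · simp [sgm, vmap, smap]

lemma sgm_monomial (n : ℕ) (d : (Fin 2 ⊕ Fin n) →₀ ℕ) (c : ℂ) :
    sgm n (monomial d c)
      = monomial d (((-1 : ℂ)) ^ (d (Sum.inl 0) + d (Sum.inl 1)) * c) := by
  rw [sgm, aeval_monomial, monomial_eq]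
  rw [Finsupp.prod_fintype _ _ (fun i => pow_zero _),
    Finsupp.prod_fintype _ _ (fun i => pow_zero _)]
  rw [Fintype.prod_sum_type, Fintype.prod_sum_type, Fin.prod_univ_two, Fin.prod_univ_two]
  simp only [smap, Sum.elim_inl, Sum.elim_inr, Matrix.cons_val_zero, Matrix.cons_val_one,
    Matrix.head_cons]
  rw [neg_pow, neg_pow, algebraMap_eq, map_mul, map_pow, map_neg, map_one]
  ring

lemma coeff_sgm (n : ℕ) (q : R2 n) (d : (Fin 2 ⊕ Fin n) →₀ ℕ) :
    coeff d (sgm n q) = ((-1 : ℂ)) ^ (d (Sum.inl 0) + d (Sum.inl 1)) * coeff d q := by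
  induction q using MvPolynomial.induction_on' with
  | monomial d' c =>
    rw [sgm_monomial, coeff_monomial, coeff_monomial]
    split_ifs with h
    · subst h; rfl
    · ring
  | add p q hp hq => rw [map_add, coeff_add, coeff_add, hp, hq]; ring

lemma even_monomial_mem (n : ℕ) (d : (Fin 2 ⊕ Fin n) →₀ ℕ) (c : ℂ)
    (hd : Even (d (Sum.inl 0) + d (Sum.inl 1))) :
    (monomial d c : R2 n) ∈ (aeval (vmap n) : R3 n →ₐ[ℂ] R2 n).range := by
  set A := (aeval (vmap n) : R3 n →ₐ[ℂ] R2 n).range with hA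
  have hx0 : ((X (Sum.inl 0) : R2 n) ^ 2) ∈ A := ⟨X (Sum.inl 0), by simp [vmap]⟩
  have hx1 : ((X (Sum.inl 1) : R2 n) ^ 2) ∈ A := ⟨X (Sum.inl 2), by simp [vmap]⟩
  have hx01 : (X (Sum.inl 0) * X (Sum.inl 1) : R2 n) ∈ A := ⟨X (Sum.inl 1), by simp [vmap]⟩
  have hy : ∀ j : Fin n, (X (Sum.inr j) : R2 n) ∈ A := fun j => ⟨X (Sum.inr j), by simp [vmap]⟩
  have hmono : (monomial d c : R2 n)
      = C c * ((X (Sum.inl 0) ^ (d (Sum.inl 0)) * X (Sum.inl 1) ^ (d (Sum.inl 1)))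
          * ∏ j : Fin n, X (Sum.inr j) ^ (d (Sum.inr j))) := by
    rw [monomial_eq, Finsupp.prod_fintype _ _ (fun i => pow_zero _), Fintype.prod_sum_type,
      Fin.prod_univ_two]
  rw [hmono]
  have hxpart : ((X (Sum.inl 0) : R2 n) ^ (d (Sum.inl 0))
      * X (Sum.inl 1) ^ (d (Sum.inl 1))) ∈ A := by
    rcases Nat.even_or_odd (d (Sum.inl 0)) with he | ho
    · obtain ⟨k, hk⟩ := he
      have he1 : Even (d (Sum.inl 1)) := by
        rcases hd with ⟨l, hl⟩
        exact ⟨l - k, by omega⟩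
      obtain ⟨l, hl⟩ := he1
      have : ((X (Sum.inl 0) : R2 n) ^ (d (Sum.inl 0)) * X (Sum.inl 1) ^ (d (Sum.inl 1)))
          = (X (Sum.inl 0) ^ 2) ^ k * (X (Sum.inl 1) ^ 2) ^ l := by
        rw [hk, hl]; ring
      rw [this]
      exact mul_mem (pow_mem hx0 k) (pow_mem hx1 l)
    · obtain ⟨k, hk⟩ := ho
      have ho1 : Odd (d (Sum.inl 1)) := by
        rcases hd with ⟨l, hl⟩
        exact ⟨l - k - 1, by omega⟩
      obtain ⟨l, hl⟩ := ho1
      have : ((X (Sum.inl 0) : R2 n) ^ (d (Sum.inl 0)) * X (Sum.inl 1) ^ (d (Sum.inl 1)))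
          = (X (Sum.inl 0) * X (Sum.inl 1)) * ((X (Sum.inl 0) ^ 2) ^ k
            * (X (Sum.inl 1) ^ 2) ^ l) := by
        rw [hk, hl]; ring
      rw [this]
      exact mul_mem hx01 (mul_mem (pow_mem hx0 k) (pow_mem hx1 l))
  have hypart : (∏ j : Fin n, (X (Sum.inr j) : R2 n) ^ (d (Sum.inr j))) ∈ A :=
    prod_mem (fun j _ => pow_mem (hy j) _)
  exact mul_mem (hA ▸ Subalgebra.algebraMap_mem A c) (mul_mem hxpart hypart)

lemma fixed_mem_range (n : ℕ) (q : R2 n) (hq : sgm n q = q) :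
    ∃ r : R3 n, aeval (vmap n) r = q := by
  have hmem : q ∈ (aeval (vmap n) : R3 n →ₐ[ℂ] R2 n).range := by
    rw [MvPolynomial.as_sum q]
    apply sum_mem
    intro d hd
    apply even_monomial_mem
    by_contra hodd
    rw [Nat.not_even_iff_odd] at hodd
    have h1 := coeff_sgm n q d
    rw [hq, hodd.neg_one_pow] at h1
    have : coeff d q = 0 := by linear_combination h1 / 2
    exact (mem_support_iff.mp hd) this
  exact hmem

lemma prod_pair {M : Type*} [CommMonoid M] (g : ℕ → M) :
    ∀ m : ℕ, ∏ i ∈ Finset.range (2 * m), g i = ∏ i ∈ Finset.range m, (g (2 * i) * g (2 * i + 1))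
  | 0 => by simp
  | (m + 1) => by
    have h2 : 2 * (m + 1) = (2 * m + 1) + 1 := by ring
    rw [h2, Finset.prod_range_succ, Finset.prod_range_succ, prod_pair g m,
      Finset.prod_range_succ, mul_assoc]

lemma G_exists (n m : ℕ) (a : Fin (2 * m) → ℂ) :
    ∃ G : MvPolynomial (Fin 3) ℂ, G.IsHomogeneous m ∧
      MvPolynomial.aeval
        ![(X (Sum.inl 0) : MvPolynomial (Fin 2 ⊕ Fin n) ℂ) ^ 2,
          X (Sum.inl 0) * X (Sum.inl 1),
          (X (Sum.inl 1)) ^ 2] G =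
        ∏ i : Fin (2 * m), (X (Sum.inl 1) - C (a i) * X (Sum.inl 0)) := by
  set b : ℕ → ℂ := fun i => if h : i < 2 * m then a ⟨i, h⟩ else 0 with hb
  set G : MvPolynomial (Fin 3) ℂ :=
    ∏ i ∈ Finset.range m,
      (X 2 - C (b (2 * i) + b (2 * i + 1)) * X 1 + C (b (2 * i) * b (2 * i + 1)) * X 0) with hG
  refine ⟨G, ?_, ?_⟩
  · have := MvPolynomial.IsHomogeneous.prod (Finset.range m)
      (fun i => (X 2 - C (b (2 * i) + b (2 * i + 1)) * X 1
        + C (b (2 * i) * b (2 * i + 1)) * X 0 : MvPolynomial (Fin 3) ℂ))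
      (fun _ => 1) (fun i _ => by
        exact ((isHomogeneous_X ℂ 2).sub (isHomogeneous_C_mul_X _ 1)).add
          (isHomogeneous_C_mul_X _ 0))
    simpa only [Finset.sum_const, Finset.card_range, smul_eq_mul, mul_one] using this
  · rw [hG, map_prod]
    have hfac : ∀ i, aeval
        ![(X (Sum.inl 0) : MvPolynomial (Fin 2 ⊕ Fin n) ℂ) ^ 2,
          X (Sum.inl 0) * X (Sum.inl 1), (X (Sum.inl 1)) ^ 2]
        (X 2 - C (b (2 * i) + b (2 * i + 1)) * X 1 + C (b (2 * i) * b (2 * i + 1)) * X 0)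
        = (X (Sum.inl 1) - C (b (2 * i)) * X (Sum.inl 0))
          * (X (Sum.inl 1) - C (b (2 * i + 1)) * X (Sum.inl 0)) := by
      intro i
      simp only [map_add, map_sub, map_mul, aeval_X, aeval_C, algebraMap_eq, map_add, map_mul]
      simp only [Matrix.cons_val_zero, Matrix.cons_val_one, Matrix.head_cons, Matrix.cons_val_two,
        Matrix.tail_cons]
      ring
    rw [Finset.prod_congr rfl (fun i _ => hfac i)]
    have : ∏ i : Fin (2 * m), (X (Sum.inl 1) - C (a i) * X (Sum.inl 0)
          : MvPolynomial (Fin 2 ⊕ Fin n) ℂ)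
        = ∏ i ∈ Finset.range (2 * m), (X (Sum.inl 1) - C (b i) * X (Sum.inl 0)) := by
      rw [← Fin.prod_univ_eq_prod_range (fun i => (X (Sum.inl 1) - C (b i) * X (Sum.inl 0)
          : MvPolynomial (Fin 2 ⊕ Fin n) ℂ)) (2 * m)]
      apply Finset.prod_congr rfl
      intro i _
      congr 1
      rw [hb]
      simp [i.isLt]
    rw [this, prod_pair]


lemma sgm_aeval (n : ℕ) (p : R3 n) :
    sgm n (aeval (vmap n) p) = aeval (vmap n) p := by
  have h : (sgm n).comp (aeval (vmap n) : R3 n →ₐ[ℂ] R2 n) = aeval (vmap n) := by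
    apply MvPolynomial.algHom_ext
    intro i
    simp only [AlgHom.comp_apply, aeval_X]
    exact sgm_comp_vmap n i
  calc sgm n (aeval (vmap n) p) = ((sgm n).comp (aeval (vmap n) : R3 n →ₐ[ℂ] R2 n)) p := rfl
    _ = aeval (vmap n) p := by rw [h]

lemma sgm_F (n m : ℕ) (a : Fin (2 * m) → ℂ) :
    sgm n ((∑ i : Fin n, (X (Sum.inr i)) ^ m) +
      ∏ i : Fin (2 * m), (X (Sum.inl 1) - C (a i) * X (Sum.inl 0)))
    = (∑ i : Fin n, (X (Sum.inr i)) ^ m) +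
      ∏ i : Fin (2 * m), (X (Sum.inl 1) - C (a i) * X (Sum.inl 0)) := by
  rw [map_add]
  congr 1
  · rw [map_sum]
    apply Finset.sum_congr rfl
    intro i _
    rw [map_pow]
    congr 1
    simp [sgm, smap]
  · rw [map_prod]
    have hfac : ∀ i : Fin (2 * m), sgm n (X (Sum.inl 1) - C (a i) * X (Sum.inl 0))
        = (-1) * (X (Sum.inl 1) - C (a i) * X (Sum.inl 0)) := by
      intro i
      rw [map_sub, map_mul]
      have h1 : sgm n (X (Sum.inl 1)) = -(X (Sum.inl 1) : R2 n) := by simp [sgm, smap]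
      have h0 : sgm n (X (Sum.inl 0)) = -(X (Sum.inl 0) : R2 n) := by simp [sgm, smap]
      have hC : sgm n (C (a i)) = (C (a i) : R2 n) := by
        rw [sgm, ← MvPolynomial.algebraMap_eq, AlgHom.commutes, MvPolynomial.algebraMap_eq]
      rw [h0, h1, hC]
      ring
    rw [Finset.prod_congr rfl (fun i _ => hfac i), Finset.prod_mul_distrib,
      Finset.prod_const, Finset.card_univ, Fintype.card_fin, pow_mul, neg_one_sq, one_pow,
      one_mul]

lemma F_ne_zero (n m : ℕ) (hn : 1 ≤ n) (hm : 2 ≤ m) (a : Fin (2 * m) → ℂ) :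
    ((∑ i : Fin n, (X (Sum.inr i)) ^ m) +
      ∏ i : Fin (2 * m), (X (Sum.inl 1) - C (a i) * X (Sum.inl 0)) : R2 n) ≠ 0 := by
  intro h0
  set g0 : Fin 2 ⊕ Fin n → ℂ :=
    Sum.elim 0 (fun j => if j = ⟨0, hn⟩ then 1 else 0) with hg0
  have := congrArg (eval g0) h0
  rw [map_zero, map_add, map_sum, map_prod] at this
  have hsum : ∀ i : Fin n, eval g0 ((X (Sum.inr i) : R2 n) ^ m)
      = if i = ⟨0, hn⟩ then 1 else 0 := by
    intro i
    rw [map_pow, eval_X]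
    simp only [hg0, Sum.elim_inr]
    split_ifs
    · exact one_pow m
    · exact zero_pow (by omega)
  have hprod : ∀ i : Fin (2 * m),
      eval g0 ((X (Sum.inl 1) - C (a i) * X (Sum.inl 0)) : R2 n) = 0 := by
    intro i
    rw [map_sub, map_mul, eval_X, eval_X, eval_C]
    simp [hg0]
  rw [Finset.sum_congr rfl (fun i _ => hsum i),
    Finset.prod_congr rfl (fun i _ => hprod i)] at this
  rw [Finset.sum_ite_eq' Finset.univ (⟨0, hn⟩ : Fin n) (fun _ => (1 : ℂ))] at this
  simp only [Finset.mem_univ, if_true, Finset.prod_const, Finset.card_univ,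
    Fintype.card_fin] at this
  rw [zero_pow (by omega : 2 * m ≠ 0)] at this
  norm_num at this

end Aux14


theorem stmt_14 (n m : ℕ) (hn : 1 ≤ n) (hm : 2 ≤ m) (a : Fin (2 * m) → ℂ)
    (F : MvPolynomial (Fin 2 ⊕ Fin n) ℂ)
    (hF : F = (∑ i : Fin n, (X (Sum.inr i)) ^ m) +
      ∏ i : Fin (2 * m), (X (Sum.inl 1) - C (a i) * X (Sum.inl 0)))
    (φ : MvPolynomial (Fin 3 ⊕ Fin n) ℂ →ₐ[ℂ] MvPolynomial (Fin 2 ⊕ Fin n) ℂ)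
    (hφ : φ = MvPolynomial.aeval
      (Sum.elim
        ![(X (Sum.inl 0) : MvPolynomial (Fin 2 ⊕ Fin n) ℂ) ^ 2,
          X (Sum.inl 0) * X (Sum.inl 1),
          (X (Sum.inl 1)) ^ 2]
        (fun j : Fin n => X (Sum.inr j)))) :
    (∃ G : MvPolynomial (Fin 3) ℂ, G.IsHomogeneous m ∧
      MvPolynomial.aeval
        ![(X (Sum.inl 0) : MvPolynomial (Fin 2 ⊕ Fin n) ℂ) ^ 2,
          X (Sum.inl 0) * X (Sum.inl 1),
          (X (Sum.inl 1)) ^ 2] G =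
        ∏ i : Fin (2 * m), (X (Sum.inl 1) - C (a i) * X (Sum.inl 0))) ∧
    (∀ G : MvPolynomial (Fin 3) ℂ, G.IsHomogeneous m →
      MvPolynomial.aeval
        ![(X (Sum.inl 0) : MvPolynomial (Fin 2 ⊕ Fin n) ℂ) ^ 2,
          X (Sum.inl 0) * X (Sum.inl 1),
          (X (Sum.inl 1)) ^ 2] G =
        ∏ i : Fin (2 * m), (X (Sum.inl 1) - C (a i) * X (Sum.inl 0)) →
      Ideal.comap φ (Ideal.span {F}) =
        Ideal.span {(∑ i : Fin n, (X (Sum.inr i)) ^ m) + rename Sum.inl G,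
          X (Sum.inl 0) * X (Sum.inl 2) - (X (Sum.inl 1)) ^ 2}) := by
  subst hF hφ
  constructor
  · exact G_exists n m a
  · intro G hGhom hGev
    have hv : (Sum.elim
        ![(X (Sum.inl 0) : MvPolynomial (Fin 2 ⊕ Fin n) ℂ) ^ 2,
          X (Sum.inl 0) * X (Sum.inl 1),
          (X (Sum.inl 1)) ^ 2]
        (fun j : Fin n => X (Sum.inr j))) = vmap n := rfl
    rw [hv]
    set F : R2 n := (∑ i : Fin n, (X (Sum.inr i)) ^ m) +
      ∏ i : Fin (2 * m), (X (Sum.inl 1) - C (a i) * X (Sum.inl 0)) with hF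
    set hpoly : R3 n := (∑ i : Fin n, (X (Sum.inr i)) ^ m) + rename Sum.inl G with hhpoly
    have hFne : F ≠ 0 := F_ne_zero n m hn hm a
    have hsgmF : sgm n F = F := sgm_F n m a
    have hφh : aeval (vmap n) hpoly = F := by
      rw [hhpoly, map_add, hF]
      congr 1
      · rw [map_sum]
        apply Finset.sum_congr rfl
        intro i _
        rw [map_pow, aeval_X]
        simp [vmap]
      · rw [aeval_rename]
        exact hGev
    have hφf : aeval (vmap n) (fpoly n) = 0 := by
      rw [fpoly, map_sub, map_mul, map_pow, aeval_X, aeval_X, aeval_X]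
      simp only [vmap, Sum.elim_inl, Matrix.cons_val_zero, Matrix.cons_val_one,
        Matrix.head_cons, Matrix.cons_val_two, Matrix.tail_cons]
      ring
    have hfp : (X (Sum.inl 0) * X (Sum.inl 2) - (X (Sum.inl 1)) ^ 2 : R3 n) = fpoly n := rfl
    rw [hfp]
    apply le_antisymm
    · intro p hp
      rw [Ideal.mem_comap] at hp
      obtain ⟨q, hq⟩ := Ideal.mem_span_singleton'.mp hp
      have hσq : sgm n q = q := by
        have h1 : sgm n (q * F) = q * F := by rw [hq]; exact sgm_aeval n p
        rw [map_mul, hsgmF] at h1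
        exact mul_right_cancel₀ hFne h1
      obtain ⟨r, hr⟩ := fixed_mem_range n q hσq
      obtain ⟨u, r0, r1, hdec⟩ := decomp n (p - r * hpoly)
      have hz : aeval (vmap n) (p - r * hpoly) = 0 := by
        rw [map_sub, map_mul, hr, hφh, ← hq]
        ring
      rw [hdec] at hz
      simp only [map_add, map_mul] at hz
      rw [hφf, aeval_rename, aeval_rename, vmap_comp_emap, aeval_X] at hz
      have hx01 : vmap n (Sum.inl 1) = X (Sum.inl 0) * X (Sum.inl 1) := by simp [vmap]
      rw [hx01] at hz
      have h0 : aeval (wmap n) r0 + X (Sum.inl 0) * X (Sum.inl 1) * aeval (wmap n) r1 = 0 := by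
        linear_combination hz
      obtain ⟨h00, h11⟩ := theta_inj r0 r1 h0
      rw [h00, h11, map_zero] at hdec
      rw [Ideal.mem_span_pair]
      exact ⟨r, u, by linear_combination -hdec⟩
    · rw [Ideal.span_le]
      rintro x hx
      simp only [Set.mem_insert_iff, Set.mem_singleton_iff] at hx
      rcases hx with rfl | rfl
      · rw [SetLike.mem_coe, Ideal.mem_comap, hφh]
        exact Ideal.mem_span_singleton_self F
      · rw [SetLike.mem_coe, Ideal.mem_comap, hφf]
        exact zero_mem _
end
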